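/- arXiv:2311.04790 — 7 statements merged into one kernel-verified Lean document; each statement's English description precedes it below -/
import Mathlib

section
/- Under the stated hypotheses, for every 𝗑 ∈ X the map ω ↦ L_ω*(T_ω(L_ω 𝗑)) is Bochner μ-integrable, so the operator T : X → X : 𝗑 ↦ ∫_Ω L_ω*(T_ω(L_ω 𝗑)) μ(dω) is well defined; moreover τ = ∫_Ω ‖L_ω‖² β(ω) μ(dω) < +∞ and T is τ-Lipschitzian. -/
open MeasureTheory
open scoped ENNReal NNReal

section Aux

open Filter

variable {Ω : Type*} [MeasurableSpace Ω]
variable {X : Type*} [NormedAddCommGroup X] [InnerProductSpace ℝ X] [CompleteSpace X]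
    [SecondCountableTopology X] [MeasurableSpace X] [BorelSpace X]
variable {H : Type*} [NormedAddCommGroup H] [InnerProductSpace ℝ H] [CompleteSpace H]
    [SecondCountableTopology H] [MeasurableSpace H] [BorelSpace H]

set_option linter.unusedSectionVars false

lemma aux_measurable_opNorm (L : Ω → X →L[ℝ] H) (hC : ∀ ξ : X, Measurable fun ω => L ω ξ) :
    Measurable fun ω => ‖L ω‖ := by
  obtain ⟨d, hd⟩ := TopologicalSpace.exists_dense_seq X
  have key : ∀ ω, ‖L ω‖ = ⨆ n, ‖L ω (d n)‖ / ‖d n‖ := by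
    intro ω
    have hle : ∀ n, ‖L ω (d n)‖ / ‖d n‖ ≤ ‖L ω‖ := by
      intro n
      rcases eq_or_ne (d n) 0 with h | h
      · simp [h]
      · rw [div_le_iff₀ (norm_pos_iff.2 h)]
        exact (L ω).le_opNorm _
    have hbdd : BddAbove (Set.range fun n => ‖L ω (d n)‖ / ‖d n‖) :=
      ⟨‖L ω‖, by rintro x ⟨n, rfl⟩; exact hle n⟩
    refine le_antisymm ?_ (ciSup_le hle)
    have hc0 : 0 ≤ ⨆ n, ‖L ω (d n)‖ / ‖d n‖ :=
      le_trans (by positivity) (le_ciSup hbdd 0)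
    refine (L ω).opNorm_le_bound hc0 ?_
    intro x
    have hclosed : IsClosed {y : X | ‖L ω y‖ ≤ (⨆ n, ‖L ω (d n)‖ / ‖d n‖) * ‖y‖} :=
      isClosed_le ((L ω).continuous.norm) (continuous_const.mul continuous_norm)
    have hmem : Set.range d ⊆ {y : X | ‖L ω y‖ ≤ (⨆ n, ‖L ω (d n)‖ / ‖d n‖) * ‖y‖} := by
      rintro - ⟨n, rfl⟩
      rcases eq_or_ne (d n) 0 with h | h
      · simp [h]
      · rw [Set.mem_setOf_eq, ← div_le_iff₀ (norm_pos_iff.2 h)]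
        exact le_ciSup hbdd n
    have hx : x ∈ closure (Set.range d) := by
      rw [hd.closure_range]; trivial
    exact hclosed.closure_subset_iff.2 hmem hx
  simp_rw [key]
  exact Measurable.iSup fun n => ((hC (d n)).norm).div_const _

lemma aux_measurable_adjoint (L : Ω → X →L[ℝ] H) (hC : ∀ ξ : X, Measurable fun ω => L ω ξ)
    {h : Ω → H} (hh : Measurable h) :
    Measurable fun ω => (L ω).adjoint (h ω) := by
  obtain ⟨w, b, hb⟩ := exists_hilbertBasis ℝ X
  have horth : Orthonormal ℝ ((↑) : w → X) := hb ▸ b.orthonormal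
  haveI : Countable w := by
    refine Pairwise.countable_of_isOpen_disjoint
      (s := fun i : w => Metric.ball (i : X) (1/2)) ?_ (fun i => Metric.isOpen_ball)
      (fun i => Metric.nonempty_ball.2 (by norm_num))
    intro i j hij
    refine Metric.ball_disjoint_ball ?_
    have h1 : (inner ℝ (i : X) (j : X) : ℝ) = 0 := horth.2 hij
    have h2 : ‖(i : X)‖ = 1 := horth.1 i
    have h3 : ‖(j : X)‖ = 1 := horth.1 j
    have h4 : dist (i : X) (j : X) ^ 2 = 2 := by
      rw [dist_eq_norm, norm_sub_sq_real, h1, h2, h3]; ring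
    nlinarith [dist_nonneg (x := (i : X)) (y := (j : X))]
  have key : ∀ ω, HasSum (fun i : w => (inner ℝ (L ω (b i)) (h ω) : ℝ) • (b i : X))
      ((L ω).adjoint (h ω)) := by
    intro ω
    have := b.hasSum_repr ((L ω).adjoint (h ω))
    convert this using 2 with i
    rw [b.repr_apply_apply, ContinuousLinearMap.adjoint_inner_right]
  refine measurable_of_tendsto_metrizable' (atTop : Filter (Finset w))
    (f := fun s ω => ∑ i ∈ s, (inner ℝ (L ω (b i)) (h ω) : ℝ) • (b i : X)) ?_ ?_
  · intro s
    exact Finset.measurable_sum _ fun i _ => ((hC (b i)).inner hh).smul_const _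
  · rw [tendsto_pi_nhds]
    intro ω
    exact (key ω)

lemma aux_memℒp_two {μ : Measure Ω} {E : Type*} [NormedAddCommGroup E] {f : Ω → E}
    (hm : AEStronglyMeasurable f μ) (h : (∫⁻ ω, (‖f ω‖₊ : ℝ≥0∞) ^ 2 ∂μ) < ⊤) :
    MemLp f 2 μ := by
  refine ⟨hm, ?_⟩
  rw [eLpNorm_lt_top_iff_lintegral_rpow_enorm_lt_top two_ne_zero ENNReal.ofNat_ne_top]
  have h2 : ∀ x : ℝ≥0∞, x ^ (2 : ℝ≥0∞).toReal = x ^ (2 : ℕ) := by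
    intro x
    rw [show ((2 : ℝ≥0∞)).toReal = ((2 : ℕ) : ℝ) by simp, ENNReal.rpow_natCast]
  simp only [h2]
  exact h

end Aux

/-- Proposition 3.3(i): under the stated hypotheses, for every `ξ ∈ X` the
map `ω ↦ L_ω*(T_ω(L_ω ξ))` is Bochner `μ`-integrable, so
`T : ξ ↦ ∫ L_ω*(T_ω(L_ω ξ)) dμ(ω)` is well defined; moreover
`τ = ∫ ‖L_ω‖² β(ω) dμ(ω) < +∞` and `T` is `τ`-Lipschitzian. -/
theorem stmt_1 {Ω : Type*} [MeasurableSpace Ω] {μ : Measure Ω} [SigmaFinite μ] [μ.IsComplete]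
    {X : Type*} [NormedAddCommGroup X] [InnerProductSpace ℝ X] [CompleteSpace X]
    [SecondCountableTopology X] [MeasurableSpace X] [BorelSpace X]
    {H : Type*} [NormedAddCommGroup H] [InnerProductSpace ℝ H] [CompleteSpace H]
    [SecondCountableTopology H] [MeasurableSpace H] [BorelSpace H]
    (β : Ω → ℝ) (hβmeas : Measurable β) (hβpos : ∀ ω, 0 < β ω)
    (hβbdd : ∃ M : ℝ, ∀ᵐ ω ∂μ, β ω ≤ M)
    (T : Ω → H → H) (hTlip : ∀ ω x y, ‖T ω x - T ω y‖ ≤ β ω * ‖x - y‖)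
    (L : Ω → X →L[ℝ] H)
    (hA : ∀ x : Ω → H, Measurable x → (∫⁻ ω, (‖x ω‖₊ : ℝ≥0∞) ^ 2 ∂μ) < ⊤ →
      Measurable fun ω => T ω (x ω))
    (hB : ∃ z : Ω → H, Measurable z ∧ (∫⁻ ω, (‖z ω‖₊ : ℝ≥0∞) ^ 2 ∂μ) < ⊤ ∧
      (∫⁻ ω, (‖T ω (z ω)‖₊ : ℝ≥0∞) ^ 2 ∂μ) < ⊤)
    (hC : ∀ ξ : X, Measurable fun ω => L ω ξ)
    (hD : (∫⁻ ω, (‖L ω‖₊ : ℝ≥0∞) ^ 2 ∂μ) < ⊤) :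
    (∀ ξ : X, Integrable (fun ω => (L ω).adjoint (T ω (L ω ξ))) μ) ∧
    Integrable (fun ω => ‖L ω‖ ^ 2 * β ω) μ ∧
    ∀ ξ η : X,
      ‖(∫ ω, (L ω).adjoint (T ω (L ω ξ)) ∂μ) - ∫ ω, (L ω).adjoint (T ω (L ω η)) ∂μ‖ ≤
        (∫ ω, ‖L ω‖ ^ 2 * β ω ∂μ) * ‖ξ - η‖ := by
  obtain ⟨M, hM⟩ := hβbdd
  obtain ⟨z, hzmeas, hz2, hTz2⟩ := hB
  have hLnorm : Measurable fun ω => ‖L ω‖ := aux_measurable_opNorm L hC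
  have hLnn : Measurable fun ω => (‖L ω‖₊ : ℝ≥0∞) := by
    have := hLnorm.ennreal_ofReal
    simpa only [ofReal_norm, enorm_eq_nnnorm] using this
  have hmemL : MemLp (fun ω => ‖L ω‖) 2 μ :=
    aux_memℒp_two hLnorm.aestronglyMeasurable (by simpa using hD)
  have hmemz : MemLp (fun ω => ‖z ω‖) 2 μ :=
    aux_memℒp_two hzmeas.norm.aestronglyMeasurable (by simpa using hz2)
  have hTzmeas : Measurable fun ω => T ω (z ω) := hA z hzmeas hz2
  have hmemTz : MemLp (fun ω => ‖T ω (z ω)‖) 2 μ :=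
    aux_memℒp_two hTzmeas.norm.aestronglyMeasurable (by simpa using hTz2)
  have h11 : (1 : ℝ≥0∞) / 1 = 1 / 2 + 1 / 2 := by
    rw [one_div, one_div, inv_one, ENNReal.inv_two_add_inv_two]
  have hmul : ∀ f g : Ω → ℝ, MemLp f 2 μ → MemLp g 2 μ →
      Integrable (fun ω => f ω * g ω) μ := by
    intro f g hf hg
    have h := MemLp.smul (r := 1) hg hf (hpqr := ⟨by rw [inv_one, ENNReal.inv_two_add_inv_two]⟩)
    rw [← memLp_one_iff_integrable]
    exact h
  have I_LL : Integrable (fun ω => ‖L ω‖ ^ 2) μ := hmemL.integrable_sq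
  have I_Lz : Integrable (fun ω => ‖L ω‖ * ‖z ω‖) μ := hmul _ _ hmemL hmemz
  have I_LTz : Integrable (fun ω => ‖L ω‖ * ‖T ω (z ω)‖) μ := hmul _ _ hmemL hmemTz
  have hTLmeas : ∀ ξ : X, Measurable fun ω => T ω (L ω ξ) := by
    intro ξ
    refine hA _ (hC ξ) ?_
    calc (∫⁻ ω, (‖L ω ξ‖₊ : ℝ≥0∞) ^ 2 ∂μ)
        ≤ ∫⁻ ω, (‖L ω‖₊ : ℝ≥0∞) ^ 2 * (‖ξ‖₊ : ℝ≥0∞) ^ 2 ∂μ := by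
          refine lintegral_mono fun ω => ?_
          rw [← mul_pow, ← ENNReal.coe_mul]
          gcongr
          exact (L ω).le_opNNNorm ξ
      _ = (∫⁻ ω, (‖L ω‖₊ : ℝ≥0∞) ^ 2 ∂μ) * (‖ξ‖₊ : ℝ≥0∞) ^ 2 :=
          lintegral_mul_const _ (hLnn.pow_const 2)
      _ < ⊤ := ENNReal.mul_lt_top hD (ENNReal.pow_lt_top ENNReal.coe_lt_top)
  have humeas : ∀ ξ : X, Measurable fun ω => (L ω).adjoint (T ω (L ω ξ)) :=
    fun ξ => aux_measurable_adjoint L hC (hTLmeas ξ)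
  have hadj : ∀ (ω) (y : H), ‖(L ω).adjoint y‖ ≤ ‖L ω‖ * ‖y‖ := by
    intro ω y
    calc ‖(L ω).adjoint y‖ ≤ ‖(L ω).adjoint‖ * ‖y‖ := ((L ω).adjoint).le_opNorm y
      _ = ‖L ω‖ * ‖y‖ := by rw [ContinuousLinearMap.adjoint.norm_map]
  have hint : ∀ ξ : X, Integrable (fun ω => (L ω).adjoint (T ω (L ω ξ))) μ := by
    intro ξ
    have hbnd : Integrable (fun ω => M * (‖ξ‖ * ‖L ω‖ ^ 2) +
        (M * (‖L ω‖ * ‖z ω‖) + ‖L ω‖ * ‖T ω (z ω)‖)) μ :=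
      ((I_LL.const_mul ‖ξ‖).const_mul M).add ((I_Lz.const_mul M).add I_LTz)
    refine hbnd.mono' (humeas ξ).aestronglyMeasurable ?_
    filter_upwards [hM] with ω hMω
    have hβ0 : (0 : ℝ) < β ω := hβpos ω
    have h1 : ‖(L ω).adjoint (T ω (L ω ξ))‖ ≤ ‖L ω‖ * ‖T ω (L ω ξ)‖ := hadj ω _
    have h2 : ‖T ω (L ω ξ)‖ ≤ β ω * ‖L ω ξ - z ω‖ + ‖T ω (z ω)‖ := by
      calc ‖T ω (L ω ξ)‖ = ‖T ω (L ω ξ) - T ω (z ω) + T ω (z ω)‖ := by rw [sub_add_cancel]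
        _ ≤ ‖T ω (L ω ξ) - T ω (z ω)‖ + ‖T ω (z ω)‖ := norm_add_le _ _
        _ ≤ β ω * ‖L ω ξ - z ω‖ + ‖T ω (z ω)‖ := by
            exact add_le_add_left (hTlip ω _ _) _
    have h3 : ‖L ω ξ - z ω‖ ≤ ‖L ω‖ * ‖ξ‖ + ‖z ω‖ := by
      calc ‖L ω ξ - z ω‖ ≤ ‖L ω ξ‖ + ‖z ω‖ := norm_sub_le _ _
        _ ≤ ‖L ω‖ * ‖ξ‖ + ‖z ω‖ := add_le_add_left ((L ω).le_opNorm ξ) _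
    have h4 : ‖T ω (L ω ξ)‖ ≤ β ω * (‖L ω‖ * ‖ξ‖ + ‖z ω‖) + ‖T ω (z ω)‖ :=
      h2.trans (add_le_add_left (mul_le_mul_of_nonneg_left h3 hβ0.le) _)
    calc ‖(L ω).adjoint (T ω (L ω ξ))‖ ≤ ‖L ω‖ * ‖T ω (L ω ξ)‖ := h1
      _ ≤ ‖L ω‖ * (β ω * (‖L ω‖ * ‖ξ‖ + ‖z ω‖) + ‖T ω (z ω)‖) :=
          mul_le_mul_of_nonneg_left h4 (norm_nonneg _)
      _ = β ω * (‖ξ‖ * ‖L ω‖ ^ 2) + (β ω * (‖L ω‖ * ‖z ω‖) + ‖L ω‖ * ‖T ω (z ω)‖) := by ring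
      _ ≤ M * (‖ξ‖ * ‖L ω‖ ^ 2) + (M * (‖L ω‖ * ‖z ω‖) + ‖L ω‖ * ‖T ω (z ω)‖) := by
          have hn1 : (0 : ℝ) ≤ ‖ξ‖ * ‖L ω‖ ^ 2 := by positivity
          have hn2 : (0 : ℝ) ≤ ‖L ω‖ * ‖z ω‖ := by positivity
          exact add_le_add (mul_le_mul_of_nonneg_right hMω hn1)
            (add_le_add_left (mul_le_mul_of_nonneg_right hMω hn2) _)
  have hτ : Integrable (fun ω => ‖L ω‖ ^ 2 * β ω) μ := by
    refine (I_LL.const_mul M).mono' ((hLnorm.pow_const 2).mul hβmeas).aestronglyMeasurable ?_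
    filter_upwards [hM] with ω hMω
    have hβ0 := (hβpos ω).le
    rw [Real.norm_eq_abs, abs_of_nonneg (by positivity)]
    calc ‖L ω‖ ^ 2 * β ω ≤ ‖L ω‖ ^ 2 * M := mul_le_mul_of_nonneg_left hMω (sq_nonneg _)
      _ = M * ‖L ω‖ ^ 2 := mul_comm _ _
  refine ⟨hint, hτ, ?_⟩
  intro ξ η
  have hpt : ∀ ω, ‖(L ω).adjoint (T ω (L ω ξ)) - (L ω).adjoint (T ω (L ω η))‖ ≤
      ‖L ω‖ ^ 2 * β ω * ‖ξ - η‖ := by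
    intro ω
    rw [← map_sub]
    calc ‖(L ω).adjoint (T ω (L ω ξ) - T ω (L ω η))‖
        ≤ ‖L ω‖ * ‖T ω (L ω ξ) - T ω (L ω η)‖ := hadj ω _
      _ ≤ ‖L ω‖ * (β ω * ‖L ω ξ - L ω η‖) :=
          mul_le_mul_of_nonneg_left (hTlip ω _ _) (norm_nonneg _)
      _ = ‖L ω‖ * (β ω * ‖L ω (ξ - η)‖) := by rw [map_sub]
      _ ≤ ‖L ω‖ * (β ω * (‖L ω‖ * ‖ξ - η‖)) :=
          mul_le_mul_of_nonneg_left
            (mul_le_mul_of_nonneg_left ((L ω).le_opNorm _) (hβpos ω).le) (norm_nonneg _)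
      _ = ‖L ω‖ ^ 2 * β ω * ‖ξ - η‖ := by ring
  calc ‖(∫ ω, (L ω).adjoint (T ω (L ω ξ)) ∂μ) - ∫ ω, (L ω).adjoint (T ω (L ω η)) ∂μ‖
      = ‖∫ ω, ((L ω).adjoint (T ω (L ω ξ)) - (L ω).adjoint (T ω (L ω η))) ∂μ‖ := by
        rw [integral_sub (hint ξ) (hint η)]
    _ ≤ ∫ ω, ‖(L ω).adjoint (T ω (L ω ξ)) - (L ω).adjoint (T ω (L ω η))‖ ∂μ :=
        norm_integral_le_integral_norm _
    _ ≤ ∫ ω, ‖L ω‖ ^ 2 * β ω * ‖ξ - η‖ ∂μ :=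
        integral_mono ((hint ξ).sub (hint η)).norm (hτ.mul_const _) fun ω => hpt ω
    _ = (∫ ω, ‖L ω‖ ^ 2 * β ω ∂μ) * ‖ξ - η‖ := integral_mul_const _ _
end

section
/- Under the stated hypotheses, suppose in addition that for every ω ∈ Ω the operator T_ω is 1/β(ω)-cocoercive (i.e., ⟨x − y, T_ω x − T_ω y⟩ ≥ (1/β(ω))‖T_ω x − T_ω y‖² for all x, y ∈ H) and L_ω ≠ 0. Then the operator T : X → X : 𝗑 ↦ ∫_Ω L_ω*(T_ω(L_ω 𝗑)) μ(dω) is 1/τ-cocoercive, where τ = ∫_Ω ‖L_ω‖² β(ω) μ(dω), i.e., ⟨𝗑 − 𝗒, T𝗑 − T𝗒⟩ ≥ (1/τ)‖T𝗑 − T𝗒‖² for all 𝗑, 𝗒 ∈ X. -/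
open MeasureTheory
open scoped ENNReal NNReal

lemma aux_opNorm_eq {X Y : Type*} [NormedAddCommGroup X] [NormedSpace ℝ X]
    [NormedAddCommGroup Y] [NormedSpace ℝ Y]
    {d : ℕ → X} (hd : DenseRange d) (L : X →L[ℝ] Y) :
    ‖L‖ = ⨆ n, ‖L (d n)‖ / ‖d n‖ := by
  have hterm : ∀ n, ‖L (d n)‖ / ‖d n‖ ≤ ‖L‖ := by
    intro n
    rcases eq_or_ne (d n) 0 with h | h
    · simp [h, norm_nonneg]
    · rw [div_le_iff₀ (norm_pos_iff.2 h)]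
      exact L.le_opNorm _
  have hbdd : BddAbove (Set.range fun n => ‖L (d n)‖ / ‖d n‖) := by
    refine ⟨‖L‖, ?_⟩
    rintro _ ⟨n, rfl⟩
    exact hterm n
  set S := ⨆ n, ‖L (d n)‖ / ‖d n‖ with hS
  have hS0 : 0 ≤ S :=
    le_ciSup_of_le hbdd 0 (div_nonneg (norm_nonneg _) (norm_nonneg _))
  have hd_le : ∀ n, ‖L (d n)‖ ≤ S * ‖d n‖ := by
    intro n
    rcases eq_or_ne (d n) 0 with h | h
    · simp [h]
    · rw [← div_le_iff₀ (norm_pos_iff.2 h)]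
      exact le_ciSup hbdd n
  refine le_antisymm ?_ (ciSup_le hterm)
  refine L.opNorm_le_bound hS0 fun x => ?_
  refine le_of_forall_pos_le_add fun ε hε => ?_
  have hden : 0 < S + ‖L‖ + 1 := by positivity
  obtain ⟨n, hn⟩ := hd.exists_dist_lt x (div_pos hε hden)
  have hdist : ‖x - d n‖ < ε / (S + ‖L‖ + 1) := by
    rwa [← dist_eq_norm]
  have h1 : ‖L x‖ ≤ ‖L (d n)‖ + ‖L (x - d n)‖ := by
    have : x - d n + d n = x := sub_add_cancel x (d n)
    calc ‖L x‖ = ‖L (x - d n) + L (d n)‖ := by rw [← map_add, this]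
         _ ≤ ‖L (x - d n)‖ + ‖L (d n)‖ := norm_add_le _ _
         _ = _ := by ring
  have h2 : ‖L (x - d n)‖ ≤ ‖L‖ * (ε / (S + ‖L‖ + 1)) :=
    le_trans (L.le_opNorm _) (by
      exact mul_le_mul_of_nonneg_left hdist.le (norm_nonneg _))
  have h3 : ‖d n‖ ≤ ‖x‖ + ε / (S + ‖L‖ + 1) := by
    have h := norm_sub_norm_le (d n) x
    rw [norm_sub_rev] at h
    linarith [hdist.le]
  have h4 : ‖L (d n)‖ ≤ S * (‖x‖ + ε / (S + ‖L‖ + 1)) :=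
    le_trans (hd_le n) (mul_le_mul_of_nonneg_left h3 hS0)
  have hεpos : 0 ≤ ε / (S + ‖L‖ + 1) := by positivity
  have : (S + ‖L‖) * (ε / (S + ‖L‖ + 1)) ≤ ε := by
    rw [div_eq_inv_mul, ← mul_assoc]
    have : (S + ‖L‖) * (S + ‖L‖ + 1)⁻¹ ≤ 1 := by
      rw [mul_inv_le_iff₀ hden]
      linarith
    nlinarith [hε.le]
  calc ‖L x‖ ≤ S * (‖x‖ + ε / (S + ‖L‖ + 1)) + ‖L‖ * (ε / (S + ‖L‖ + 1)) := by linarith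
    _ = S * ‖x‖ + (S + ‖L‖) * (ε / (S + ‖L‖ + 1)) := by ring
    _ ≤ S * ‖x‖ + ε := by linarith

lemma aux_measurable_of_inner {Ω : Type*} [MeasurableSpace Ω]
    {X : Type*} [NormedAddCommGroup X] [InnerProductSpace ℝ X]
    [SecondCountableTopology X] [MeasurableSpace X] [BorelSpace X]
    (f : Ω → X) (hf : ∀ ζ : X, Measurable fun ω => (inner ℝ (f ω) ζ : ℝ)) :
    Measurable f := by
  have : Nonempty X := ⟨0⟩
  set d := TopologicalSpace.denseSeq X with hd_def
  have hd : DenseRange d := TopologicalSpace.denseRange_denseSeq X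
  have hdist : ∀ x : X, Measurable fun ω => dist (f ω) x := by
    intro x
    have key : ∀ ω, dist (f ω) x = ⨆ n, ‖(inner ℝ (f ω - x) (d n) : ℝ)‖ / ‖d n‖ := by
      intro ω
      have h1 := aux_opNorm_eq hd (innerSL ℝ (f ω - x))
      have h2 : ‖innerSL ℝ (f ω - x)‖ = ‖f ω - x‖ := innerSL_apply_norm _ _
      rw [dist_eq_norm, ← h2, h1]
      simp only [innerSL_apply_apply]
    simp only [key]
    apply Measurable.iSup
    intro n
    apply Measurable.div _ measurable_const
    apply Measurable.norm
    have : ∀ ω, (inner ℝ (f ω - x) (d n) : ℝ) = inner ℝ (f ω) (d n) - (inner ℝ x (d n) : ℝ) := by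
      intro ω; rw [inner_sub_left]
    simp only [this]
    exact (hf (d n)).sub measurable_const
  set B : Set (Set X) := {s : Set X | ∃ (n : ℕ) (r : ℝ), 0 < r ∧ s = Metric.ball (d n) r}
    with hB_def
  have hbasis : TopologicalSpace.IsTopologicalBasis B := by
    apply TopologicalSpace.isTopologicalBasis_of_isOpen_of_nhds
    · rintro s ⟨n, r, -, rfl⟩; exact Metric.isOpen_ball
    · intro x u hx hu
      rcases Metric.isOpen_iff.1 hu x hx with ⟨r, hr, hball⟩
      rcases hd.exists_dist_lt x (show (0:ℝ) < r/2 by linarith) with ⟨n, hn⟩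
      refine ⟨Metric.ball (d n) (r/2), ⟨n, r/2, by linarith, rfl⟩, ?_, ?_⟩
      · rw [Metric.mem_ball]; exact hn
      · intro y hy
        apply hball
        rw [Metric.mem_ball] at hy ⊢
        calc dist y x ≤ dist y (d n) + dist (d n) x := dist_triangle _ _ _
          _ < r/2 + r/2 := by rw [dist_comm (d n) x]; exact add_lt_add hy hn
          _ = r := by ring
  have heq : (inferInstance : MeasurableSpace X) = MeasurableSpace.generateFrom B := by
    rw [BorelSpace.measurable_eq (α := X), hbasis.borel_eq_generateFrom]
  rw [show (Measurable f) = @Measurable Ω X _ (MeasurableSpace.generateFrom B) f from by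
    rw [← heq]]
  apply measurable_generateFrom
  rintro s ⟨n, r, hr, rfl⟩
  have : f ⁻¹' Metric.ball (d n) r = {ω | dist (f ω) (d n) < r} := by
    ext ω; simp [Metric.mem_ball]
  rw [this]
  exact measurableSet_lt (hdist (d n)) measurable_const

lemma aux_sq_int {Ω : Type*} [MeasurableSpace Ω] {μ : Measure Ω}
    (g : Ω → ℝ) (hg : Measurable g)
    (hfin : (∫⁻ ω, (‖g ω‖₊ : ℝ≥0∞) ^ 2 ∂μ) < ⊤) :
    Integrable (fun ω => g ω ^ 2) μ := by
  refine ⟨(hg.pow_const 2).aestronglyMeasurable, ?_⟩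
  have : ∀ ω, ((‖g ω ^ 2‖₊ : ℝ≥0∞)) = (‖g ω‖₊ : ℝ≥0∞) ^ 2 := by
    intro ω; rw [nnnorm_pow]; push_cast; ring
  simpa only [HasFiniteIntegral, enorm_eq_nnnorm, this] using hfin

lemma aux_mul_int {Ω : Type*} [MeasurableSpace Ω] {μ : Measure Ω}
    (g h : Ω → ℝ) (hg : Measurable g) (hh : Measurable h)
    (hg2 : Integrable (fun ω => g ω ^ 2) μ) (hh2 : Integrable (fun ω => h ω ^ 2) μ) :
    Integrable (fun ω => g ω * h ω) μ := by
  refine Integrable.mono' ((hg2.add hh2).div_const 2)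
    ((hg.mul hh).aestronglyMeasurable) (.of_forall fun ω => ?_)
  rw [Real.norm_eq_abs, abs_mul]
  show |g ω| * |h ω| ≤ (g ω ^ 2 + h ω ^ 2) / 2
  nlinarith [sq_nonneg (|g ω| - |h ω|), sq_abs (g ω), sq_abs (h ω), abs_nonneg (g ω),
    abs_nonneg (h ω)]

/-- Proposition 3.3(iii)(a): under the hypotheses of Statement 1, if in
addition every `T_ω` is `1/β(ω)`-cocoercive and `L_ω ≠ 0`, then
`T : ξ ↦ ∫ L_ω*(T_ω(L_ω ξ)) dμ(ω)` is `1/τ`-cocoercive with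
`τ = ∫ ‖L_ω‖² β(ω) dμ(ω)`. -/
theorem stmt_2 {Ω : Type*} [MeasurableSpace Ω] {μ : Measure Ω} [SigmaFinite μ] [μ.IsComplete]
    {X : Type*} [NormedAddCommGroup X] [InnerProductSpace ℝ X] [CompleteSpace X]
    [SecondCountableTopology X] [MeasurableSpace X] [BorelSpace X]
    {H : Type*} [NormedAddCommGroup H] [InnerProductSpace ℝ H] [CompleteSpace H]
    [SecondCountableTopology H] [MeasurableSpace H] [BorelSpace H]
    (β : Ω → ℝ) (hβmeas : Measurable β) (hβpos : ∀ ω, 0 < β ω)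
    (hβbdd : ∃ M : ℝ, ∀ᵐ ω ∂μ, β ω ≤ M)
    (T : Ω → H → H) (hTlip : ∀ ω x y, ‖T ω x - T ω y‖ ≤ β ω * ‖x - y‖)
    (L : Ω → X →L[ℝ] H)
    (hA : ∀ x : Ω → H, Measurable x → (∫⁻ ω, (‖x ω‖₊ : ℝ≥0∞) ^ 2 ∂μ) < ⊤ →
      Measurable fun ω => T ω (x ω))
    (hB : ∃ z : Ω → H, Measurable z ∧ (∫⁻ ω, (‖z ω‖₊ : ℝ≥0∞) ^ 2 ∂μ) < ⊤ ∧
      (∫⁻ ω, (‖T ω (z ω)‖₊ : ℝ≥0∞) ^ 2 ∂μ) < ⊤)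
    (hC : ∀ ξ : X, Measurable fun ω => L ω ξ)
    (hD : (∫⁻ ω, (‖L ω‖₊ : ℝ≥0∞) ^ 2 ∂μ) < ⊤)
    (hcoco : ∀ ω (x y : H),
      (1 / β ω) * ‖T ω x - T ω y‖ ^ 2 ≤ inner ℝ (x - y) (T ω x - T ω y))
    (hLne : ∀ ω, L ω ≠ 0) :
    ∀ ξ η : X,
      (1 / (∫ ω, ‖L ω‖ ^ 2 * β ω ∂μ)) *
          ‖(∫ ω, (L ω).adjoint (T ω (L ω ξ)) ∂μ) - ∫ ω, (L ω).adjoint (T ω (L ω η)) ∂μ‖ ^ 2 ≤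
        inner ℝ (ξ - η)
          ((∫ ω, (L ω).adjoint (T ω (L ω ξ)) ∂μ) - ∫ ω, (L ω).adjoint (T ω (L ω η)) ∂μ) := by
  obtain ⟨z, hzmeas, hz2, hTz2⟩ := hB
  obtain ⟨M, hM⟩ := hβbdd
  set M0 : ℝ := max M 0 with hM0_def
  have hβM0 : ∀ᵐ ω ∂μ, β ω ≤ M0 := hM.mono fun ω h => le_trans h (le_max_left _ _)
  have hM0nn : 0 ≤ M0 := le_max_right _ _
  have : Nonempty X := ⟨0⟩
  set d := TopologicalSpace.denseSeq X with hd_def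
  have hd : DenseRange d := TopologicalSpace.denseRange_denseSeq X
  -- measurability of the operator norm
  have mnL : Measurable fun ω => ‖L ω‖ := by
    have h : ∀ ω, ‖L ω‖ = ⨆ n, ‖L ω (d n)‖ / ‖d n‖ := fun ω => aux_opNorm_eq hd (L ω)
    simp only [h]
    exact Measurable.iSup fun n => ((hC (d n)).norm.div measurable_const)
  -- integrability of squares
  have intL2 : Integrable (fun ω => ‖L ω‖ ^ 2) μ := by
    refine aux_sq_int _ mnL ?_
    simpa only [nnnorm_norm] using hD
  have intz2 : Integrable (fun ω => ‖z ω‖ ^ 2) μ := by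
    refine aux_sq_int _ hzmeas.norm ?_
    simpa only [nnnorm_norm] using hz2
  have intTz2 : Integrable (fun ω => ‖T ω (z ω)‖ ^ 2) μ := by
    refine aux_sq_int _ ?_ ?_
    · exact (hA z hzmeas hz2).norm
    · simpa only [nnnorm_norm] using hTz2
  -- measurability of T ω (L ω ζ)
  have hTLmeas : ∀ ζ : X, Measurable fun ω => T ω (L ω ζ) := by
    intro ζ
    apply hA _ (hC ζ)
    have hle : ∀ ω, (‖L ω ζ‖₊ : ℝ≥0∞) ^ 2 ≤ (‖ζ‖₊ : ℝ≥0∞) ^ 2 * (‖L ω‖₊ : ℝ≥0∞) ^ 2 := by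
      intro ω
      have h1 : ‖L ω ζ‖₊ ≤ ‖L ω‖₊ * ‖ζ‖₊ := (L ω).le_opNNNorm ζ
      have h2 : (‖L ω ζ‖₊ : ℝ≥0∞) ≤ (‖L ω‖₊ : ℝ≥0∞) * (‖ζ‖₊ : ℝ≥0∞) := by
        exact_mod_cast h1
      calc (‖L ω ζ‖₊ : ℝ≥0∞) ^ 2 ≤ ((‖L ω‖₊ : ℝ≥0∞) * (‖ζ‖₊ : ℝ≥0∞)) ^ 2 := by gcongr
        _ = (‖ζ‖₊ : ℝ≥0∞) ^ 2 * (‖L ω‖₊ : ℝ≥0∞) ^ 2 := by ring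
    have mLen : Measurable fun ω => (‖L ω‖₊ : ℝ≥0∞) ^ 2 := by
      have : ∀ ω, ((‖L ω‖₊ : ℝ≥0∞)) = ENNReal.ofReal ‖L ω‖ := by
        intro ω; rw [ofReal_norm, enorm_eq_nnnorm]
      simp only [this]
      exact (mnL.ennreal_ofReal).pow_const 2
    calc (∫⁻ ω, (‖L ω ζ‖₊ : ℝ≥0∞) ^ 2 ∂μ)
        ≤ ∫⁻ ω, (‖ζ‖₊ : ℝ≥0∞) ^ 2 * (‖L ω‖₊ : ℝ≥0∞) ^ 2 ∂μ := lintegral_mono hle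
      _ = (‖ζ‖₊ : ℝ≥0∞) ^ 2 * ∫⁻ ω, (‖L ω‖₊ : ℝ≥0∞) ^ 2 ∂μ := lintegral_const_mul _ mLen
      _ < ⊤ := ENNReal.mul_lt_top (ENNReal.pow_lt_top ENNReal.coe_lt_top) hD
  -- pointwise bound on ‖T ω x‖
  have hTbound : ∀ (x : H) (ω : Ω), ‖T ω x‖ ≤ β ω * (‖x‖ + ‖z ω‖) + ‖T ω (z ω)‖ := by
    intro x ω
    have h1 : ‖T ω x - T ω (z ω)‖ ≤ β ω * ‖x - z ω‖ := hTlip ω x (z ω)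
    have h2 : ‖x - z ω‖ ≤ ‖x‖ + ‖z ω‖ := norm_sub_le _ _
    have h3 := norm_add_le (T ω x - T ω (z ω)) (T ω (z ω))
    rw [sub_add_cancel] at h3
    have h4 : β ω * ‖x - z ω‖ ≤ β ω * (‖x‖ + ‖z ω‖) :=
      mul_le_mul_of_nonneg_left h2 (hβpos ω).le
    linarith
  -- measurability of adjoint integrand
  have hadj_meas : ∀ ζ : X, Measurable fun ω => (L ω).adjoint (T ω (L ω ζ)) := by
    intro ζ
    apply aux_measurable_of_inner
    intro v
    have h : ∀ ω, (inner ℝ ((L ω).adjoint (T ω (L ω ζ))) v : ℝ) =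
        (inner ℝ (T ω (L ω ζ)) (L ω v) : ℝ) := fun ω =>
      ContinuousLinearMap.adjoint_inner_left _ _ _
    simp only [h]
    exact (hTLmeas ζ).inner (hC v)
  -- norm of adjoint
  have hadj_norm : ∀ ω (v : H), ‖(L ω).adjoint v‖ ≤ ‖L ω‖ * ‖v‖ := by
    intro ω v
    have h := ((L ω).adjoint).le_opNorm v
    have h2 : ‖(L ω).adjoint‖ = ‖L ω‖ := ContinuousLinearMap.adjoint.norm_map (L ω)
    rw [h2] at h
    exact h
  -- integrability of adjoint integrand
  have hadj_int : ∀ ζ : X, Integrable (fun ω => (L ω).adjoint (T ω (L ω ζ))) μ := by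
    intro ζ
    refine Integrable.mono'
      (g := fun ω => M0 * ‖ζ‖ * ‖L ω‖ ^ 2 + M0 * (‖L ω‖ * ‖z ω‖) + ‖L ω‖ * ‖T ω (z ω)‖)
      ?_ ((hadj_meas ζ).aestronglyMeasurable) ?_
    · exact ((intL2.const_mul (M0 * ‖ζ‖)).add
        ((aux_mul_int _ _ mnL hzmeas.norm intL2 intz2).const_mul M0)).add
        (aux_mul_int _ _ mnL (hA z hzmeas hz2).norm intL2 intTz2)
    · filter_upwards [hβM0] with ω hω
      have a1 := hTbound (L ω ζ) ω
      have a2 : ‖L ω ζ‖ ≤ ‖L ω‖ * ‖ζ‖ := (L ω).le_opNorm ζ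
      have b1 : β ω * (‖L ω ζ‖ + ‖z ω‖) ≤ M0 * (‖L ω‖ * ‖ζ‖ + ‖z ω‖) := by
        apply mul_le_mul hω (by linarith) (by positivity) hM0nn
      have c1 : ‖T ω (L ω ζ)‖ ≤ M0 * (‖L ω‖ * ‖ζ‖ + ‖z ω‖) + ‖T ω (z ω)‖ := by linarith
      calc ‖(L ω).adjoint (T ω (L ω ζ))‖ ≤ ‖L ω‖ * ‖T ω (L ω ζ)‖ := hadj_norm ω _
        _ ≤ ‖L ω‖ * (M0 * (‖L ω‖ * ‖ζ‖ + ‖z ω‖) + ‖T ω (z ω)‖) :=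
            mul_le_mul_of_nonneg_left c1 (norm_nonneg _)
        _ = M0 * ‖ζ‖ * ‖L ω‖ ^ 2 + M0 * (‖L ω‖ * ‖z ω‖) + ‖L ω‖ * ‖T ω (z ω)‖ := by ring
  intro ξ η
  set gξ : Ω → X := fun ω => (L ω).adjoint (T ω (L ω ξ)) with hgξ_def
  set gη : Ω → X := fun ω => (L ω).adjoint (T ω (L ω η)) with hgη_def
  set τ : ℝ := ∫ ω, ‖L ω‖ ^ 2 * β ω ∂μ with hτ_def
  have hint_sub : Integrable (fun ω => gξ ω - gη ω) μ := (hadj_int ξ).sub (hadj_int η)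
  have hsub_int_eq : (∫ ω, gξ ω ∂μ) - (∫ ω, gη ω ∂μ) = ∫ ω, (gξ ω - gη ω) ∂μ :=
    (integral_sub (hadj_int ξ) (hadj_int η)).symm
  set u : Ω → H := fun ω => T ω (L ω ξ) - T ω (L ω η) with hu_def
  have hgdiff : ∀ ω, gξ ω - gη ω = (L ω).adjoint (u ω) := fun ω =>
    (map_sub ((L ω).adjoint) (T ω (L ω ξ)) (T ω (L ω η))).symm
  set p : Ω → ℝ := fun ω => (inner ℝ (ξ - η) (gξ ω - gη ω) : ℝ) with hp_def
  have p_int : Integrable p μ := hint_sub.const_inner (ξ - η)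
  have hp_eq : ∀ ω, p ω = (inner ℝ (L ω ξ - L ω η) (u ω) : ℝ) := by
    intro ω
    simp only [hp_def]
    rw [hgdiff ω, ContinuousLinearMap.adjoint_inner_right, map_sub]
  set g2 : Ω → ℝ := fun ω => ‖u ω‖ ^ 2 / β ω with hg2_def
  have hg2nonneg : ∀ ω, 0 ≤ g2 ω := fun ω => div_nonneg (sq_nonneg _) (hβpos ω).le
  have hg2p : ∀ ω, g2 ω ≤ p ω := by
    intro ω
    rw [hp_eq ω]
    calc g2 ω = (1 / β ω) * ‖u ω‖ ^ 2 := by simp only [hg2_def]; ring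
      _ ≤ _ := hcoco ω (L ω ξ) (L ω η)
  have hu_meas : Measurable u := (hTLmeas ξ).sub (hTLmeas η)
  have g2_meas : Measurable g2 := (hu_meas.norm.pow_const 2).div hβmeas
  have g2_int : Integrable g2 μ :=
    p_int.mono' g2_meas.aestronglyMeasurable (.of_forall fun ω => by
      rw [Real.norm_eq_abs, abs_of_nonneg (hg2nonneg ω)]; exact hg2p ω)
  set f1 : Ω → ℝ := fun ω => ‖L ω‖ * Real.sqrt (β ω) with hf1_def
  set f2 : Ω → ℝ := fun ω => ‖u ω‖ / Real.sqrt (β ω) with hf2_def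
  have hsqrtpos : ∀ ω, 0 < Real.sqrt (β ω) := fun ω => Real.sqrt_pos.2 (hβpos ω)
  have hf1sq : ∀ ω, f1 ω ^ 2 = ‖L ω‖ ^ 2 * β ω := by
    intro ω; simp only [hf1_def]; rw [mul_pow, Real.sq_sqrt (hβpos ω).le]
  have hf2sq : ∀ ω, f2 ω ^ 2 = g2 ω := by
    intro ω; simp only [hf2_def, hg2_def]; rw [div_pow, Real.sq_sqrt (hβpos ω).le]
  have f1_meas : Measurable f1 := mnL.mul hβmeas.sqrt
  have f2_meas : Measurable f2 := hu_meas.norm.div hβmeas.sqrt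
  have f1sq_int : Integrable (fun ω => f1 ω ^ 2) μ := by
    simp only [hf1sq]
    refine Integrable.mono' (intL2.const_mul M0)
      ((mnL.pow_const 2).mul hβmeas).aestronglyMeasurable ?_
    filter_upwards [hβM0] with ω hω
    rw [Real.norm_eq_abs, abs_of_nonneg (mul_nonneg (sq_nonneg _) (hβpos ω).le)]
    calc ‖L ω‖ ^ 2 * β ω ≤ ‖L ω‖ ^ 2 * M0 := mul_le_mul_of_nonneg_left hω (sq_nonneg _)
      _ = M0 * ‖L ω‖ ^ 2 := by ring
  have f2sq_int : Integrable (fun ω => f2 ω ^ 2) μ := by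
    simp only [hf2sq]; exact g2_int
  have f1f2_int : Integrable (fun ω => f1 ω * f2 ω) μ :=
    aux_mul_int _ _ f1_meas f2_meas f1sq_int f2sq_int
  have hf1f2 : ∀ ω, ‖L ω‖ * ‖u ω‖ = f1 ω * f2 ω := by
    intro ω
    simp only [hf1_def, hf2_def]
    field_simp [(hsqrtpos ω).ne']
  have h2e : ENNReal.ofReal 2 = (2 : ℝ≥0∞) := by norm_num
  have memf1 : MemLp f1 (ENNReal.ofReal 2) μ := by
    rw [h2e]
    exact (memLp_two_iff_integrable_sq f1_meas.aestronglyMeasurable).2 f1sq_int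
  have memf2 : MemLp f2 (ENNReal.ofReal 2) μ := by
    rw [h2e]
    exact (memLp_two_iff_integrable_sq f2_meas.aestronglyMeasurable).2 f2sq_int
  have hconj : Real.HolderConjugate 2 2 := Real.HolderConjugate.two_two
  have holder := integral_mul_le_Lp_mul_Lq_of_nonneg hconj
    (Filter.Eventually.of_forall fun ω =>
      mul_nonneg (norm_nonneg _) (Real.sqrt_nonneg _))
    (Filter.Eventually.of_forall fun ω =>
      div_nonneg (norm_nonneg _) (Real.sqrt_nonneg _))
    memf1 memf2
  have rpow2 : ∀ v : ℝ, v ^ (2 : ℝ) = v ^ 2 := fun v => by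
    rw [show (2 : ℝ) = ((2 : ℕ) : ℝ) by norm_num, Real.rpow_natCast]
  simp only [rpow2, hf1sq, hf2sq] at holder
  rw [← Real.sqrt_eq_rpow, ← Real.sqrt_eq_rpow] at holder
  set I : ℝ := ∫ ω, g2 ω ∂μ with hI_def
  have τ0 : 0 ≤ τ := integral_nonneg fun ω => mul_nonneg (sq_nonneg _) (hβpos ω).le
  have I0 : 0 ≤ I := integral_nonneg hg2nonneg
  have hnorm_le : ‖(∫ ω, gξ ω ∂μ) - ∫ ω, gη ω ∂μ‖ ≤ Real.sqrt τ * Real.sqrt I := by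
    rw [hsub_int_eq]
    calc ‖∫ ω, (gξ ω - gη ω) ∂μ‖ ≤ ∫ ω, ‖gξ ω - gη ω‖ ∂μ := norm_integral_le_integral_norm _
      _ ≤ ∫ ω, f1 ω * f2 ω ∂μ := by
          apply integral_mono hint_sub.norm f1f2_int
          intro ω
          show ‖gξ ω - gη ω‖ ≤ f1 ω * f2 ω
          rw [hgdiff ω, ← hf1f2 ω]
          exact hadj_norm ω (u ω)
      _ ≤ Real.sqrt τ * Real.sqrt I := by
          rw [hτ_def]
          have e1 : ∀ a, (‖L a‖ * Real.sqrt (β a)) ^ 2 = ‖L a‖ ^ 2 * β a := hf1sq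
          have e2 : ∀ a, (‖u a‖ / Real.sqrt (β a)) ^ 2 = g2 a := hf2sq
          simpa only [hf1_def, hf2_def, e1, e2] using holder
  have hRHS : I ≤ (inner ℝ (ξ - η) ((∫ ω, gξ ω ∂μ) - ∫ ω, gη ω ∂μ) : ℝ) := by
    rw [hsub_int_eq, ← integral_inner hint_sub (ξ - η)]
    exact integral_mono g2_int p_int hg2p
  have hsq : ‖(∫ ω, gξ ω ∂μ) - ∫ ω, gη ω ∂μ‖ ^ 2 ≤ τ * I := by
    have h := mul_le_mul hnorm_le hnorm_le (norm_nonneg _)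
      (mul_nonneg (Real.sqrt_nonneg _) (Real.sqrt_nonneg _))
    calc ‖(∫ ω, gξ ω ∂μ) - ∫ ω, gη ω ∂μ‖ ^ 2
        = ‖(∫ ω, gξ ω ∂μ) - ∫ ω, gη ω ∂μ‖ * ‖(∫ ω, gξ ω ∂μ) - ∫ ω, gη ω ∂μ‖ := by ring
      _ ≤ (Real.sqrt τ * Real.sqrt I) * (Real.sqrt τ * Real.sqrt I) := h
      _ = (Real.sqrt τ * Real.sqrt τ) * (Real.sqrt I * Real.sqrt I) := by ring
      _ = τ * I := by rw [Real.mul_self_sqrt τ0, Real.mul_self_sqrt I0]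
  rcases eq_or_lt_of_le τ0 with hτ | hτ
  · rw [← hτ]
    have h0 : (1 : ℝ) / 0 = 0 := by norm_num
    rw [h0, zero_mul]
    exact le_trans I0 hRHS
  · have h1 : (1 / τ) * ‖(∫ ω, gξ ω ∂μ) - ∫ ω, gη ω ∂μ‖ ^ 2 ≤ (1 / τ) * (τ * I) :=
      mul_le_mul_of_nonneg_left hsq (by positivity)
    have h2 : (1 / τ) * (τ * I) = I := by field_simp
    linarith [hRHS]
end

section
/- Under the stated hypotheses, the integral resolvent mixture W = rmi(L_ω, A_ω)_{ω∈Ω} and the integral resolvent comixture C = rcm(L_ω, A_ω)_{ω∈Ω} are maximally monotone operators on X. -/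
open MeasureTheory
open scoped ENNReal NNReal

/-- A set-valued operator `A : H → Set H` (identified with its graph) is monotone if
`⟪x − y, u − v⟫ ≥ 0` whenever `u ∈ A x` and `v ∈ A y`. -/
def IsMonotoneOp {H : Type*} [NormedAddCommGroup H] [InnerProductSpace ℝ H]
    (A : H → Set H) : Prop :=
  ∀ ⦃x u y v : H⦄, u ∈ A x → v ∈ A y → (0 : ℝ) ≤ inner ℝ (x - y) (u - v)

/-- `A` is maximally monotone: it is monotone and its graph is not properly contained in the
graph of any monotone operator. -/
def IsMaxMonotone {H : Type*} [NormedAddCommGroup H] [InnerProductSpace ℝ H]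
    (A : H → Set H) : Prop :=
  IsMonotoneOp A ∧ ∀ B : H → Set H, IsMonotoneOp B → (∀ x, A x ⊆ B x) → ∀ x, B x ⊆ A x

/-- The inverse operator `A⁻¹`, whose graph is `{(u, x) : (x, u) ∈ gra A}`. -/
def graphInv {H : Type*} (A : H → Set H) : H → Set H := fun u => {x | u ∈ A x}

/-- `J` is the resolvent `(Id + A)⁻¹` of `A` (as a single-valued, everywhere-defined map):
`J x = y ↔ x − y ∈ A y`. -/
def IsResolventOf {H : Type*} [AddCommGroup H] (A : H → Set H) (J : H → H) : Prop :=
  ∀ x y, J x = y ↔ x - y ∈ A y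

/-- For a single-valued map `R : X → X`, `rmiOp R = R⁻¹ − Id` as a set-valued operator:
`u ∈ (R⁻¹ − Id)(x) ↔ R (x + u) = x`. -/
def rmiOp {X : Type*} [AddCommGroup X] (R : X → X) : X → Set X :=
  fun x => {u | R (x + u) = x}

/-! ### Auxiliary lemmas -/

/-- Pettis measurability: a weakly measurable map into a separable Hilbert space
is measurable. -/
lemma measurable_of_inner_meas {Ω X : Type*} [MeasurableSpace Ω]
    [NormedAddCommGroup X] [InnerProductSpace ℝ X]
    [SecondCountableTopology X] [MeasurableSpace X] [BorelSpace X]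
    {f : Ω → X} (h : ∀ c : X, Measurable fun ω => (inner ℝ c (f ω) : ℝ)) :
    Measurable f := by
  have key : ∀ c : X, Measurable fun ω => ‖f ω - c‖ := by
    intro c
    obtain ⟨d, hd⟩ := TopologicalSpace.exists_dense_seq X
    have hrep : ∀ v : X, ‖v - c‖ ^ 2 / 2
        = ⨆ n, ((inner ℝ (d n) v : ℝ) - inner ℝ (d n) c - ‖d n‖ ^ 2 / 2) := by
      intro v
      have hbdd : BddAbove (Set.range fun n =>
          ((inner ℝ (d n) v : ℝ) - inner ℝ (d n) c - ‖d n‖ ^ 2 / 2)) := by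
        refine ⟨‖v - c‖ ^ 2 / 2, ?_⟩
        rintro r ⟨n, rfl⟩
        have h1 : ‖d n - (v - c)‖ ^ 2 = ‖d n‖ ^ 2 - 2 * inner ℝ (d n) (v - c) + ‖v - c‖ ^ 2 :=
          norm_sub_sq_real _ _
        have h2 : (inner ℝ (d n) (v - c) : ℝ) = inner ℝ (d n) v - inner ℝ (d n) c := inner_sub_right _ _ _
        nlinarith [sq_nonneg ‖d n - (v - c)‖]
      refine le_antisymm ?_ (ciSup_le fun n => ?_)
      · rw [← sub_nonpos]
        refine le_of_forall_pos_le_add ?_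
        intro ε hε
        obtain ⟨n, hn⟩ : ∃ n, dist (d n) (v - c) < Real.sqrt (2 * ε) := by
          obtain ⟨n, hn⟩ := hd.exists_dist_lt (v - c) (by positivity : (0:ℝ) < Real.sqrt (2*ε))
          exact ⟨n, by rwa [dist_comm] at hn⟩
        have h1 : ‖d n - (v - c)‖ ^ 2 = ‖d n‖ ^ 2 - 2 * inner ℝ (d n) (v - c) + ‖v - c‖ ^ 2 :=
          norm_sub_sq_real _ _
        have h2 : (inner ℝ (d n) (v - c) : ℝ) = inner ℝ (d n) v - inner ℝ (d n) c := inner_sub_right _ _ _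
        have h3 : ‖d n - (v - c)‖ ^ 2 < 2 * ε := by
          have hd2 : ‖d n - (v - c)‖ < Real.sqrt (2 * ε) := by rwa [← dist_eq_norm]
          have hsq : Real.sqrt (2 * ε) ^ 2 = 2 * ε := Real.sq_sqrt (by positivity)
          nlinarith [norm_nonneg (d n - (v - c))]
        have h4 : ((inner ℝ (d n) v : ℝ) - inner ℝ (d n) c - ‖d n‖ ^ 2 / 2)
            ≤ ⨆ m, ((inner ℝ (d m) v : ℝ) - inner ℝ (d m) c - ‖d m‖ ^ 2 / 2) := le_ciSup hbdd n
        nlinarith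
      · have h1 : ‖d n - (v - c)‖ ^ 2 = ‖d n‖ ^ 2 - 2 * inner ℝ (d n) (v - c) + ‖v - c‖ ^ 2 :=
          norm_sub_sq_real _ _
        have h2 : (inner ℝ (d n) (v - c) : ℝ) = inner ℝ (d n) v - inner ℝ (d n) c := inner_sub_right _ _ _
        nlinarith [sq_nonneg ‖d n - (v - c)‖]
    have hmeas : Measurable fun ω => ‖f ω - c‖ ^ 2 / 2 := by
      simp only [hrep]
      exact Measurable.iSup fun n => (((h (d n)).sub measurable_const).sub measurable_const)
    have heq : (fun ω => ‖f ω - c‖) = fun ω => Real.sqrt (2 * (‖f ω - c‖ ^ 2 / 2)) := by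
      funext ω
      rw [mul_div_cancel₀ _ (two_ne_zero), Real.sqrt_sq (norm_nonneg _)]
    rw [heq]
    exact Real.continuous_sqrt.measurable.comp (hmeas.const_mul 2)
  refine measurable_of_isClosed fun s hs => ?_
  rcases s.eq_empty_or_nonempty with rfl | ⟨z, hz⟩
  · simp
  · haveI : Nonempty s := ⟨⟨z, hz⟩⟩
    obtain ⟨u, hu⟩ := TopologicalSpace.exists_dense_seq s
    have hset : f ⁻¹' s = {ω | (⨅ n, ‖f ω - (u n : X)‖) = 0} := by
      ext ω
      simp only [Set.mem_preimage, Set.mem_setOf_eq]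
      constructor
      · intro hmem
        refine le_antisymm ?_ (le_ciInf fun n => norm_nonneg _)
        refine le_of_forall_pos_le_add ?_
        intro ε hε
        obtain ⟨n, hn⟩ := hu.exists_dist_lt (⟨f ω, hmem⟩ : s) hε
        have hlt : ‖f ω - (u n : X)‖ < ε := by
          have h' := hn
          rw [Subtype.dist_eq, dist_eq_norm] at h'
          exact h'
        calc (⨅ n, ‖f ω - (u n : X)‖) ≤ ‖f ω - (u n : X)‖ :=
              ciInf_le ⟨0, by rintro r ⟨m, rfl⟩; exact norm_nonneg _⟩ n
          _ ≤ 0 + ε := by linarith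
      · intro h0
        rw [← hs.closure_eq]
        rw [Metric.mem_closure_iff]
        intro ε hε
        have hlt : (⨅ n, ‖f ω - (u n : X)‖) < ε := by rw [h0]; exact hε
        obtain ⟨n, hn⟩ := exists_lt_of_ciInf_lt hlt
        exact ⟨u n, (u n).2, by rwa [dist_eq_norm]⟩
    rw [hset]
    exact (Measurable.iInf fun n => key _) (measurableSet_singleton 0)

section MonotoneLemmas
variable {H : Type*} [NormedAddCommGroup H] [InnerProductSpace ℝ H]

lemma monotone_graphInv {A : H → Set H} (h : IsMonotoneOp A) : IsMonotoneOp (graphInv A) := by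
  intro x u y v hu hv
  have := h hu hv
  rwa [real_inner_comm] at this

lemma maxMonotone_graphInv {A : H → Set H} (h : IsMaxMonotone A) :
    IsMaxMonotone (graphInv A) := by
  refine ⟨monotone_graphInv h.1, ?_⟩
  intro B hB hsub u x hx
  have hB' : IsMonotoneOp (graphInv B) := monotone_graphInv hB
  have hsub' : ∀ x, A x ⊆ graphInv B x := by
    intro z w hw
    exact hsub w (by exact hw : z ∈ graphInv A w)
  exact h.2 (graphInv B) hB' hsub' x hx

lemma firm_of_resolvent {A : H → Set H} (hA : IsMonotoneOp A) {J : H → H}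
    (hJ : IsResolventOf A J) (a b : H) :
    ‖J a - J b‖ ^ 2 ≤ inner ℝ (a - b) (J a - J b) := by
  have ha : a - J a ∈ A (J a) := (hJ a (J a)).mp rfl
  have hb : b - J b ∈ A (J b) := (hJ b (J b)).mp rfl
  have hmono := hA ha hb
  have h2 : (a - J a) - (b - J b) = (a - b) - (J a - J b) := by abel
  rw [h2, inner_sub_right, real_inner_self_eq_norm_sq] at hmono
  rw [real_inner_comm]
  linarith

lemma nonexp_of_firm {J : H → H}
    (h : ∀ a b, ‖J a - J b‖ ^ 2 ≤ inner ℝ (a - b) (J a - J b)) (a b : H) :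
    ‖J a - J b‖ ≤ ‖a - b‖ := by
  rcases eq_or_lt_of_le (norm_nonneg (J a - J b)) with h0 | h0
  · rw [← h0]; exact norm_nonneg _
  · have h1 := h a b
    have h2 : (inner ℝ (a - b) (J a - J b) : ℝ) ≤ ‖a - b‖ * ‖J a - J b‖ := real_inner_le_norm _ _
    have h3 := h1.trans h2
    rw [sq] at h3
    exact le_of_mul_le_mul_right h3 h0

/-- Minty-type lemma: if `R` is firmly nonexpansive (and everywhere defined), then
`R⁻¹ − Id` is maximally monotone. -/
lemma maxMonotone_rmiOp {X : Type*} [NormedAddCommGroup X] [InnerProductSpace ℝ X] {R : X → X}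
    (h : ∀ ξ η, ‖R ξ - R η‖ ^ 2 ≤ inner ℝ (ξ - η) (R ξ - R η)) :
    IsMaxMonotone (rmiOp R) := by
  constructor
  · intro x u y v hu hv
    have hu' : R (x + u) = x := hu
    have hv' : R (y + v) = y := hv
    have hfirm := h (x + u) (y + v)
    rw [hu', hv'] at hfirm
    have e : (x + u) - (y + v) = (x - y) + (u - v) := by abel
    rw [e, inner_add_left, real_inner_self_eq_norm_sq] at hfirm
    have h5 : (0:ℝ) ≤ inner ℝ (u - v) (x - y) := by linarith
    rwa [real_inner_comm] at h5
  · intro B hB hsub x v hv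
    have hmem : (x + v - R (x + v)) ∈ rmiOp R (R (x + v)) := by
      show R (R (x + v) + (x + v - R (x + v))) = R (x + v)
      congr 1
      abel
    have hmono := hB hv (hsub _ hmem)
    have e : v - (x + v - R (x + v)) = -(x - R (x + v)) := by abel
    rw [e, inner_neg_right, real_inner_self_eq_norm_sq] at hmono
    have hx0 : ‖x - R (x + v)‖ ^ 2 = 0 := le_antisymm (by linarith) (sq_nonneg _)
    show R (x + v) = x
    have h1 := pow_eq_zero_iff (n := 2) (by norm_num) |>.mp hx0
    rw [norm_sub_eq_zero_iff] at h1
    exact h1.symm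

end MonotoneLemmas

/-- The analytic core: under the integrability and measurability hypotheses, the operator
`ξ ↦ ∫ L_ω* (J_ω (L_ω ξ)) dμ` built from a family of firmly nonexpansive maps is firmly
nonexpansive, hence its `rmiOp` is maximally monotone. -/
lemma core_maxMonotone
    {Ω : Type*} [MeasurableSpace Ω] {μ : Measure Ω}
    {X : Type*} [NormedAddCommGroup X] [InnerProductSpace ℝ X] [CompleteSpace X]
    [SecondCountableTopology X] [MeasurableSpace X] [BorelSpace X]
    {H : Type*} [NormedAddCommGroup H] [InnerProductSpace ℝ H] [CompleteSpace H]
    [SecondCountableTopology H] [MeasurableSpace H] [BorelSpace H]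
    (J : Ω → H → H)
    (hfirm : ∀ ω a b, ‖J ω a - J ω b‖ ^ 2 ≤ inner ℝ (a - b) (J ω a - J ω b))
    (hJmeas : ∀ x : Ω → H, Measurable x → Measurable fun ω => J ω (x ω))
    (L : Ω → X →L[ℝ] H)
    (hLmeas : ∀ ξ : X, Measurable fun ω => L ω ξ)
    (hLint : Integrable (fun ω => ‖L ω‖ ^ 2) μ)
    (hL1 : (∫ ω, ‖L ω‖ ^ 2 ∂μ) ≤ 1)
    (p : Ω → H)
    (hint1 : Integrable (fun ω => ‖L ω‖ * ‖p ω‖) μ)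
    (hint2 : Integrable (fun ω => ‖L ω‖ * ‖J ω (p ω)‖) μ) :
    IsMaxMonotone (rmiOp fun ξ : X => ∫ ω, (L ω).adjoint (J ω (L ω ξ)) ∂μ) := by
  set g : X → Ω → X := fun ξ ω => (L ω).adjoint (J ω (L ω ξ)) with hg
  have hnon : ∀ ω (a b : H), ‖J ω a - J ω b‖ ≤ ‖a - b‖ := fun ω => nonexp_of_firm (hfirm ω)
  have hadj : ∀ ω (h : H), ‖(L ω).adjoint h‖ ≤ ‖L ω‖ * ‖h‖ := by
    intro ω h
    calc ‖(L ω).adjoint h‖ ≤ ‖(L ω).adjoint‖ * ‖h‖ := ((L ω).adjoint).le_opNorm h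
      _ = ‖L ω‖ * ‖h‖ := by rw [LinearIsometryEquiv.norm_map ContinuousLinearMap.adjoint (L ω)]
  have hgmeas : ∀ ξ, Measurable (g ξ) := by
    intro ξ
    apply measurable_of_inner_meas
    intro c
    have e : (fun ω => (inner ℝ c (g ξ ω) : ℝ)) = fun ω => (inner ℝ (L ω c) (J ω (L ω ξ)) : ℝ) :=
      funext fun ω => ContinuousLinearMap.adjoint_inner_right (L ω) c _
    rw [e]
    exact (hLmeas c).inner (hJmeas _ (hLmeas ξ))
  have hLn : AEMeasurable (fun ω => ‖L ω‖) μ := by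
    have h3 : AEMeasurable (fun ω => Real.sqrt (‖L ω‖ ^ 2)) μ :=
      Real.continuous_sqrt.measurable.comp_aemeasurable hLint.aemeasurable
    exact h3.congr (ae_of_all _ fun ω => Real.sqrt_sq (norm_nonneg _))
  have hgint : ∀ ξ, Integrable (g ξ) μ := by
    intro ξ
    have hb : Integrable
        (fun ω => ‖L ω‖ ^ 2 * ‖ξ‖ + (‖L ω‖ * ‖p ω‖ + ‖L ω‖ * ‖J ω (p ω)‖)) μ :=
      (hLint.mul_const _).add (hint1.add hint2)
    refine hb.mono' (hgmeas ξ).aestronglyMeasurable (ae_of_all _ fun ω => ?_)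
    have h1 : ‖J ω (L ω ξ)‖ ≤ ‖L ω‖ * ‖ξ‖ + ‖p ω‖ + ‖J ω (p ω)‖ := by
      have h2 := norm_sub_norm_le (J ω (L ω ξ)) (J ω (p ω))
      have h3 := hnon ω (L ω ξ) (p ω)
      have h4 := norm_sub_le (L ω ξ) (p ω)
      have h5 := (L ω).le_opNorm ξ
      linarith
    calc ‖g ξ ω‖ ≤ ‖L ω‖ * ‖J ω (L ω ξ)‖ := hadj ω _
      _ ≤ ‖L ω‖ * (‖L ω‖ * ‖ξ‖ + ‖p ω‖ + ‖J ω (p ω)‖) :=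
          mul_le_mul_of_nonneg_left h1 (norm_nonneg _)
      _ = ‖L ω‖ ^ 2 * ‖ξ‖ + (‖L ω‖ * ‖p ω‖ + ‖L ω‖ * ‖J ω (p ω)‖) := by ring
  apply maxMonotone_rmiOp
  intro ξ η
  set d : Ω → H := fun ω => J ω (L ω ξ) - J ω (L ω η) with hd
  have hdmeas : Measurable d := (hJmeas _ (hLmeas ξ)).sub (hJmeas _ (hLmeas η))
  have hdle : ∀ ω, ‖d ω‖ ≤ ‖L ω‖ * ‖ξ - η‖ := by
    intro ω
    calc ‖d ω‖ ≤ ‖L ω ξ - L ω η‖ := hnon ω _ _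
      _ = ‖L ω (ξ - η)‖ := by rw [map_sub]
      _ ≤ ‖L ω‖ * ‖ξ - η‖ := (L ω).le_opNorm _
  have hI2int : Integrable (fun ω => ‖d ω‖ ^ 2) μ := by
    refine (hLint.mul_const (‖ξ - η‖ ^ 2)).mono'
      (hdmeas.norm.pow_const 2).aestronglyMeasurable (ae_of_all _ fun ω => ?_)
    rw [Real.norm_eq_abs, abs_of_nonneg (sq_nonneg _)]
    calc ‖d ω‖ ^ 2 ≤ (‖L ω‖ * ‖ξ - η‖) ^ 2 := pow_le_pow_left₀ (norm_nonneg _) (hdle ω) 2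
      _ = ‖L ω‖ ^ 2 * ‖ξ - η‖ ^ 2 := by ring
  set gd : Ω → X := fun ω => (L ω).adjoint (d ω) with hgd
  have hgd_eq : (fun ω => g ξ ω - g η ω) = gd := funext fun ω => (map_sub _ _ _).symm
  have hgdint : Integrable gd μ := hgd_eq ▸ ((hgint ξ).sub (hgint η))
  have hRsub : (∫ ω, g ξ ω ∂μ) - (∫ ω, g η ω ∂μ) = ∫ ω, gd ω ∂μ := by
    rw [← integral_sub (hgint ξ) (hgint η), ← hgd_eq]
  have key1 : (∫ ω, ‖d ω‖ ^ 2 ∂μ)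
      ≤ inner ℝ (ξ - η) ((∫ ω, g ξ ω ∂μ) - (∫ ω, g η ω ∂μ)) := by
    have e1 : (inner ℝ (ξ - η) ((∫ ω, g ξ ω ∂μ) - (∫ ω, g η ω ∂μ)) : ℝ)
        = ∫ ω, (inner ℝ (ξ - η) (gd ω) : ℝ) ∂μ := by
      rw [hRsub]
      exact (integral_inner hgdint (ξ - η)).symm
    rw [e1]
    refine integral_mono hI2int (hgdint.const_inner _) fun ω => ?_
    show ‖d ω‖ ^ 2 ≤ (inner ℝ (ξ - η) ((L ω).adjoint (d ω)) : ℝ)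
    rw [ContinuousLinearMap.adjoint_inner_right]
    have h6 := hfirm ω (L ω ξ) (L ω η)
    rwa [← map_sub] at h6
  have key2 : ‖(∫ ω, g ξ ω ∂μ) - (∫ ω, g η ω ∂μ)‖ ^ 2 ≤ ∫ ω, ‖d ω‖ ^ 2 ∂μ := by
    have hLd_int : Integrable (fun ω => ‖L ω‖ * ‖d ω‖) μ := by
      refine (hLint.mul_const (‖ξ - η‖)).mono'
        ((hLn.mul hdmeas.norm.aemeasurable).aestronglyMeasurable) (ae_of_all _ fun ω => ?_)
      rw [Real.norm_eq_abs, abs_of_nonneg (by positivity)]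
      calc ‖L ω‖ * ‖d ω‖ ≤ ‖L ω‖ * (‖L ω‖ * ‖ξ - η‖) :=
            mul_le_mul_of_nonneg_left (hdle ω) (norm_nonneg _)
        _ = ‖L ω‖ ^ 2 * ‖ξ - η‖ := by ring
    have hn1 : ‖(∫ ω, g ξ ω ∂μ) - (∫ ω, g η ω ∂μ)‖ ≤ ∫ ω, ‖L ω‖ * ‖d ω‖ ∂μ := by
      rw [hRsub]
      calc ‖∫ ω, gd ω ∂μ‖ ≤ ∫ ω, ‖gd ω‖ ∂μ := norm_integral_le_integral_norm _
        _ ≤ ∫ ω, ‖L ω‖ * ‖d ω‖ ∂μ :=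
            integral_mono hgdint.norm hLd_int fun ω => hadj ω (d ω)
    have hpq : Real.HolderConjugate 2 2 := Real.HolderConjugate.two_two
    have h2e : (ENNReal.ofReal (2:ℝ)) = 2 := by norm_num
    have hmemL : MemLp (fun ω => ‖L ω‖) (ENNReal.ofReal (2:ℝ)) μ := by
      rw [h2e]
      exact (memLp_two_iff_integrable_sq hLn.aestronglyMeasurable).mpr hLint
    have hmemd : MemLp (fun ω => ‖d ω‖) (ENNReal.ofReal (2:ℝ)) μ := by
      rw [h2e]
      exact (memLp_two_iff_integrable_sq hdmeas.norm.aestronglyMeasurable).mpr hI2int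
    have hH := integral_mul_le_Lp_mul_Lq_of_nonneg hpq
      (ae_of_all _ fun ω => norm_nonneg (L ω)) (ae_of_all _ fun ω => norm_nonneg (d ω))
      hmemL hmemd
    have erpow : ∀ r : ℝ, r ^ (2:ℝ) = r ^ (2:ℕ) := fun r => by
      rw [show ((2:ℝ)) = ((2:ℕ):ℝ) by norm_num, Real.rpow_natCast]
    simp only [erpow] at hH
    have I2nonneg : (0:ℝ) ≤ ∫ ω, ‖d ω‖ ^ 2 ∂μ := integral_nonneg fun ω => sq_nonneg _
    have bound1 : (∫ ω, ‖L ω‖ ^ 2 ∂μ) ^ (1/2 : ℝ) ≤ 1 :=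
      Real.rpow_le_one (integral_nonneg fun ω => sq_nonneg _) hL1 (by norm_num)
    have hfin : ∫ ω, ‖L ω‖ * ‖d ω‖ ∂μ ≤ (∫ ω, ‖d ω‖ ^ 2 ∂μ) ^ (1/2 : ℝ) := by
      calc ∫ ω, ‖L ω‖ * ‖d ω‖ ∂μ
          ≤ (∫ ω, ‖L ω‖ ^ 2 ∂μ) ^ (1/2 : ℝ) * (∫ ω, ‖d ω‖ ^ 2 ∂μ) ^ (1/2 : ℝ) := hH
        _ ≤ 1 * (∫ ω, ‖d ω‖ ^ 2 ∂μ) ^ (1/2 : ℝ) :=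
            mul_le_mul_of_nonneg_right bound1 (Real.rpow_nonneg I2nonneg _)
        _ = (∫ ω, ‖d ω‖ ^ 2 ∂μ) ^ (1/2 : ℝ) := one_mul _
    have hnorm_le : ‖(∫ ω, g ξ ω ∂μ) - (∫ ω, g η ω ∂μ)‖
        ≤ (∫ ω, ‖d ω‖ ^ 2 ∂μ) ^ (1/2 : ℝ) := hn1.trans hfin
    calc ‖(∫ ω, g ξ ω ∂μ) - (∫ ω, g η ω ∂μ)‖ ^ 2
        ≤ ((∫ ω, ‖d ω‖ ^ 2 ∂μ) ^ (1/2 : ℝ)) ^ 2 :=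
          pow_le_pow_left₀ (norm_nonneg _) hnorm_le 2
      _ = ∫ ω, ‖d ω‖ ^ 2 ∂μ := by
          rw [← Real.rpow_natCast ((∫ ω, ‖d ω‖ ^ 2 ∂μ) ^ (1/2 : ℝ)) 2,
            ← Real.rpow_mul I2nonneg]
          norm_num
  exact key2.trans key1

/-- Theorem 3.5(ii): the integral resolvent mixture
`W = rmi(L_ω, A_ω) = (∫ L_ω* ∘ J_{A_ω} ∘ L_ω dμ)⁻¹ − Id` and the integral resolvent comixture
`C = rcm(L_ω, A_ω) = (rmi(L_ω, A_ω⁻¹))⁻¹` are maximally monotone. -/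
theorem stmt_3
    {Ω : Type*} [MeasurableSpace Ω] {μ : Measure Ω} [SigmaFinite μ] [μ.IsComplete]
    {X : Type*} [NormedAddCommGroup X] [InnerProductSpace ℝ X] [CompleteSpace X]
    [SecondCountableTopology X] [MeasurableSpace X] [BorelSpace X]
    {H : Type*} [NormedAddCommGroup H] [InnerProductSpace ℝ H] [CompleteSpace H]
    [SecondCountableTopology H] [MeasurableSpace H] [BorelSpace H]
    -- the family of maximally monotone operators, with its resolvents `JA ω = J_{A_ω}`
    -- and the resolvents `JAinv ω = J_{A_ω⁻¹}` of the inverses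
    (A : Ω → H → Set H) (JA JAinv : Ω → H → H)
    (hAmax : ∀ ω, IsMaxMonotone (A ω))
    (hJA : ∀ ω, IsResolventOf (A ω) (JA ω))
    (hJAinv : ∀ ω, IsResolventOf (graphInv (A ω)) (JAinv ω))
    (hJAmeas : ∀ x : Ω → H, Measurable x → Measurable fun ω => JA ω (x ω))
    (hdom : ∃ x xs : Ω → H, Measurable x ∧ Measurable xs ∧
      (∫⁻ ω, (‖x ω‖₊ : ℝ≥0∞) ^ 2 ∂μ) < ⊤ ∧ (∫⁻ ω, (‖xs ω‖₊ : ℝ≥0∞) ^ 2 ∂μ) < ⊤ ∧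
      ∀ᵐ ω ∂μ, xs ω ∈ A ω (x ω))
    -- the family of bounded linear operators
    (L : Ω → X →L[ℝ] H)
    (hLmeas : ∀ ξ : X, Measurable fun ω => L ω ξ)
    (hLint : Integrable (fun ω => ‖L ω‖ ^ 2) μ)
    (hL0 : 0 < ∫ ω, ‖L ω‖ ^ 2 ∂μ) (hL1 : (∫ ω, ‖L ω‖ ^ 2 ∂μ) ≤ 1)
    :
    IsMaxMonotone (rmiOp fun ξ : X => ∫ ω, (L ω).adjoint (JA ω (L ω ξ)) ∂μ) ∧
    IsMaxMonotone
      (graphInv (rmiOp fun ξ : X => ∫ ω, (L ω).adjoint (JAinv ω (L ω ξ)) ∂μ)) := by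
  obtain ⟨x, xs, hx, hxs, hxfin, hxsfin, hae⟩ := hdom
  -- square-integrability of `x` and `xs`
  have sqint : ∀ y : Ω → H, Measurable y → (∫⁻ ω, (‖y ω‖₊ : ℝ≥0∞) ^ 2 ∂μ) < ⊤ →
      Integrable (fun ω => ‖y ω‖ ^ 2) μ := by
    intro y hy hfin
    refine ⟨(hy.norm.pow_const 2).aestronglyMeasurable, ?_⟩
    rw [hasFiniteIntegral_def]
    have e : ∀ ω, (‖(‖y ω‖ ^ 2)‖₊ : ℝ≥0∞) = (‖y ω‖₊ : ℝ≥0∞) ^ 2 := fun ω => by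
      rw [nnnorm_pow, nnnorm_norm, ENNReal.coe_pow]
    exact lt_of_le_of_lt (le_of_eq (lintegral_congr e)) hfin
  have hx2 := sqint x hx hxfin
  have hxs2 := sqint xs hxs hxsfin
  have hLn : AEMeasurable (fun ω => ‖L ω‖) μ := by
    have h3 : AEMeasurable (fun ω => Real.sqrt (‖L ω‖ ^ 2)) μ :=
      Real.continuous_sqrt.measurable.comp_aemeasurable hLint.aemeasurable
    exact h3.congr (ae_of_all _ fun ω => Real.sqrt_sq (norm_nonneg _))
  -- a product of two square-integrable functions is integrable
  have hmul : ∀ y : Ω → H, Measurable y → Integrable (fun ω => ‖y ω‖ ^ 2) μ →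
      Integrable (fun ω => ‖L ω‖ * ‖y ω‖) μ := by
    intro y hy hy2
    refine ((hLint.add hy2).div_const 2).mono'
      ((hLn.mul hy.norm.aemeasurable).aestronglyMeasurable) (ae_of_all _ fun ω => ?_)
    rw [Real.norm_eq_abs, abs_of_nonneg (by positivity)]
    simp only [Pi.add_apply]
    nlinarith [sq_nonneg (‖L ω‖ - ‖y ω‖)]
  set p : Ω → H := fun ω => x ω + xs ω with hp
  have hpmeas : Measurable p := hx.add hxs
  have hint1 : Integrable (fun ω => ‖L ω‖ * ‖p ω‖) μ := by
    have hp2 : Integrable (fun ω => ‖p ω‖ ^ 2) μ := by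
      refine ((hx2.const_mul 2).add (hxs2.const_mul 2)).mono'
        (hpmeas.norm.pow_const 2).aestronglyMeasurable (ae_of_all _ fun ω => ?_)
      rw [Real.norm_eq_abs, abs_of_nonneg (sq_nonneg _)]
      simp only [Pi.add_apply]
      have h1 : ‖p ω‖ ≤ ‖x ω‖ + ‖xs ω‖ := norm_add_le _ _
      nlinarith [norm_nonneg (p ω), norm_nonneg (x ω), norm_nonneg (xs ω),
        sq_nonneg (‖x ω‖ - ‖xs ω‖)]
    exact hmul p hpmeas hp2
  -- firm nonexpansiveness of the resolvents
  have hfirmA : ∀ ω (a b : H), ‖JA ω a - JA ω b‖ ^ 2 ≤ inner ℝ (a - b) (JA ω a - JA ω b) :=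
    fun ω => firm_of_resolvent (hAmax ω).1 (hJA ω)
  have hJp : ∀ᵐ ω ∂μ, JA ω (p ω) = x ω := by
    filter_upwards [hae] with ω hω
    refine (hJA ω (p ω) (x ω)).mpr ?_
    have e : p ω - x ω = xs ω := by simp [hp]
    rw [e]
    exact hω
  have hint2 : Integrable (fun ω => ‖L ω‖ * ‖JA ω (p ω)‖) μ := by
    refine (hmul x hx hx2).congr ?_
    filter_upwards [hJp] with ω hω
    rw [hω]
  have part1 := core_maxMonotone JA hfirmA hJAmeas L hLmeas hLint hL1 p hint1 hint2
  -- Moreau's identity `J_{A⁻¹} = Id − J_A`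
  have hMoreau : ∀ ω z, JAinv ω z = z - JA ω z := by
    intro ω z
    refine (hJAinv ω z (z - JA ω z)).mpr ?_
    rw [sub_sub_cancel]
    show z - JA ω z ∈ A ω (JA ω z)
    exact (hJA ω z (JA ω z)).mp rfl
  have hmonoInv : ∀ ω, IsMonotoneOp (graphInv (A ω)) := fun ω => monotone_graphInv (hAmax ω).1
  have hfirmInv : ∀ ω (a b : H),
      ‖JAinv ω a - JAinv ω b‖ ^ 2 ≤ inner ℝ (a - b) (JAinv ω a - JAinv ω b) :=
    fun ω => firm_of_resolvent (hmonoInv ω) (hJAinv ω)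
  have hJAinvmeas : ∀ y : Ω → H, Measurable y → Measurable fun ω => JAinv ω (y ω) := by
    intro y hy
    simp only [hMoreau]
    exact hy.sub (hJAmeas y hy)
  have hJp' : ∀ᵐ ω ∂μ, JAinv ω (p ω) = xs ω := by
    filter_upwards [hJp] with ω hω
    rw [hMoreau, hω]
    simp [hp]
  have hint2' : Integrable (fun ω => ‖L ω‖ * ‖JAinv ω (p ω)‖) μ := by
    refine (hmul xs hxs hxs2).congr ?_
    filter_upwards [hJp'] with ω hω
    rw [hω]
  have part2 := core_maxMonotone JAinv hfirmInv hJAinvmeas L hLmeas hLint hL1 p hint1 hint2'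
  exact ⟨part1, maxMonotone_graphInv part2⟩
end

section
/- Under the stated hypotheses, the resolvent of the integral resolvent comixture C = rcm(L_ω, A_ω)_{ω∈Ω} is J_C = Id_X + ∫_Ω (L_ω* ∘ J_{A_ω} ∘ L_ω − L_ω* ∘ L_ω) μ(dω), i.e., for every 𝗑 ∈ X, J_C 𝗑 = 𝗑 + ∫_Ω (L_ω*(J_{A_ω}(L_ω 𝗑)) − L_ω*(L_ω 𝗑)) μ(dω); equivalently, C = (Id_X + ∫_Ω (L_ω* ∘ J_{A_ω} ∘ L_ω − L_ω* ∘ L_ω) μ(dω))⁻¹ − Id_X. -/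
open MeasureTheory
open scoped ENNReal NNReal

/-- Theorem 3.5(iii)&(vi): the resolvent of the integral resolvent comixture
`C = rcm(L_ω, A_ω)` is `J_C = Id + ∫ (L_ω* ∘ J_{A_ω} ∘ L_ω − L_ω* ∘ L_ω) dμ`; equivalently
`C = (Id + ∫ (L_ω* ∘ J_{A_ω} ∘ L_ω − L_ω* ∘ L_ω) dμ)⁻¹ − Id`. -/
theorem stmt_5
    {Ω : Type*} [MeasurableSpace Ω] {μ : Measure Ω} [SigmaFinite μ] [μ.IsComplete]
    {X : Type*} [NormedAddCommGroup X] [InnerProductSpace ℝ X] [CompleteSpace X]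
    [SecondCountableTopology X] [MeasurableSpace X] [BorelSpace X]
    {H : Type*} [NormedAddCommGroup H] [InnerProductSpace ℝ H] [CompleteSpace H]
    [SecondCountableTopology H] [MeasurableSpace H] [BorelSpace H]
    -- the family of maximally monotone operators, with its resolvents `JA ω = J_{A_ω}`
    -- and the resolvents `JAinv ω = J_{A_ω⁻¹}` of the inverses
    (A : Ω → H → Set H) (JA JAinv : Ω → H → H)
    (hAmax : ∀ ω, IsMaxMonotone (A ω))
    (hJA : ∀ ω, IsResolventOf (A ω) (JA ω))
    (hJAinv : ∀ ω, IsResolventOf (graphInv (A ω)) (JAinv ω))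
    (hJAmeas : ∀ x : Ω → H, Measurable x → Measurable fun ω => JA ω (x ω))
    (hdom : ∃ x xs : Ω → H, Measurable x ∧ Measurable xs ∧
      (∫⁻ ω, (‖x ω‖₊ : ℝ≥0∞) ^ 2 ∂μ) < ⊤ ∧ (∫⁻ ω, (‖xs ω‖₊ : ℝ≥0∞) ^ 2 ∂μ) < ⊤ ∧
      ∀ᵐ ω ∂μ, xs ω ∈ A ω (x ω))
    -- the family of bounded linear operators
    (L : Ω → X →L[ℝ] H)
    (hLmeas : ∀ ξ : X, Measurable fun ω => L ω ξ)
    (hLint : Integrable (fun ω => ‖L ω‖ ^ 2) μ)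
    (hL0 : 0 < ∫ ω, ‖L ω‖ ^ 2 ∂μ) (hL1 : (∫ ω, ‖L ω‖ ^ 2 ∂μ) ≤ 1)
    :
    IsResolventOf
      (graphInv (rmiOp fun ξ : X => ∫ ω, (L ω).adjoint (JAinv ω (L ω ξ)) ∂μ))
      (fun ξ : X =>
        ξ + ∫ ω, ((L ω).adjoint (JA ω (L ω ξ)) - (L ω).adjoint (L ω ξ)) ∂μ) ∧
    graphInv (rmiOp fun ξ : X => ∫ ω, (L ω).adjoint (JAinv ω (L ω ξ)) ∂μ)
      = rmiOp (fun ξ : X =>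
          ξ + ∫ ω, ((L ω).adjoint (JA ω (L ω ξ)) - (L ω).adjoint (L ω ξ)) ∂μ) :=  by
  -- Minty's identity: J_{A⁻¹} = Id − J_A
  have minty : ∀ ω h, JAinv ω h = h - JA ω h := by
    intro ω h
    have h1 : h - JA ω h ∈ A ω (JA ω h) := (hJA ω h (JA ω h)).mp rfl
    refine (hJAinv ω h (h - JA ω h)).mpr ?_
    show h - JA ω h ∈ A ω (h - (h - JA ω h))
    simpa using h1
  -- the integrand identity
  have key : ∀ ξ : X, (∫ ω, (L ω).adjoint (JAinv ω (L ω ξ)) ∂μ)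
      = -∫ ω, ((L ω).adjoint (JA ω (L ω ξ)) - (L ω).adjoint (L ω ξ)) ∂μ := by
    intro ξ
    rw [← integral_neg]
    congr 1
    funext ω
    rw [minty ω (L ω ξ), map_sub, neg_sub]
  constructor
  · intro x y
    show x + (∫ ω, ((L ω).adjoint (JA ω (L ω x)) - (L ω).adjoint (L ω x)) ∂μ) = y ↔
      (∫ ω, (L ω).adjoint (JAinv ω (L ω ((x - y) + y))) ∂μ) = x - y
    rw [sub_add_cancel, key x]
    set I := ∫ ω, ((L ω).adjoint (JA ω (L ω x)) - (L ω).adjoint (L ω x)) ∂μ with hI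
    constructor
    · intro h; rw [← h]; abel
    · intro h
      have h2 : x = -I + y := sub_eq_iff_eq_add.mp h.symm
      rw [h2]; abel
  · funext x
    ext u
    show (∫ ω, (L ω).adjoint (JAinv ω (L ω (u + x))) ∂μ) = u ↔
      x + u + (∫ ω, ((L ω).adjoint (JA ω (L ω (x + u))) - (L ω).adjoint (L ω (x + u))) ∂μ) = x
    rw [show u + x = x + u from add_comm u x, key (x + u)]
    set I := ∫ ω, ((L ω).adjoint (JA ω (L ω (x + u))) - (L ω).adjoint (L ω (x + u))) ∂μ with hI
    constructor
    · intro h; rw [← h]; abel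
    · intro h
      have h2 : u + I = 0 := by
        apply add_left_cancel (a := x)
        rw [← add_assoc, add_zero]; exact h
      exact neg_eq_of_add_eq_zero_left h2
end

section
/- Under the stated hypotheses, suppose in addition that μ is a probability measure and that every L_ω is an isometry (‖L_ω 𝗑‖ = ‖𝗑‖ for all 𝗑 ∈ X). Then the integral resolvent mixture and comixture coincide: rmi(L_ω, A_ω)_{ω∈Ω} = rcm(L_ω, A_ω)_{ω∈Ω}. -/
open MeasureTheory
open scoped ENNReal NNReal

section Aux

variable {Ω : Type*} [MeasurableSpace Ω]
variable {X : Type*} [NormedAddCommGroup X] [InnerProductSpace ℝ X] [CompleteSpace X]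
  [SecondCountableTopology X] [MeasurableSpace X] [BorelSpace X]

/-- An orthonormal set in a separable space is countable. -/
lemma countable_of_orthonormal' {w : Set X} (hw : Orthonormal ℝ ((↑) : w → X)) :
    Countable w := by
  have hdisj : Pairwise (Function.onFun Disjoint fun i : w => Metric.ball (i : X) (1/2)) := by
    intro i j hij
    refine Metric.ball_disjoint_ball ?_
    have hsq : ‖(i : X) - (j : X)‖ ^ 2 = 2 := by
      have h1 : ‖((↑) : w → X) i‖ = 1 := hw.1 i
      have h2 : ‖((↑) : w → X) j‖ = 1 := hw.1 j
      have h3 : (inner ℝ (((↑) : w → X) i) (((↑) : w → X) j) : ℝ) = 0 := hw.2 hij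
      rw [norm_sub_sq_real]
      rw [h1, h2, h3]; norm_num
    have hd : (1 : ℝ) ≤ dist (i : X) (j : X) := by
      rw [dist_eq_norm]
      nlinarith [norm_nonneg ((i : X) - (j : X))]
    linarith
  exact hdisj.countable_of_isOpen_disjoint (fun i => Metric.isOpen_ball)
    (fun i => Metric.nonempty_ball.mpr (by norm_num))

/-- Pettis measurability: a weakly measurable map into a separable Hilbert space is measurable. -/
lemma measurable_of_inner' {f : Ω → X}
    (h : ∀ ξ : X, Measurable fun ω => (inner ℝ (f ω) ξ : ℝ)) : Measurable f := by
  obtain ⟨w, b, hb⟩ := exists_hilbertBasis ℝ X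
  have hcw : Countable w := countable_of_orthonormal' (hb ▸ b.orthonormal)
  haveI : (Filter.atTop : Filter (Finset w)).NeBot := Filter.atTop_neBot
  refine measurable_of_tendsto_metrizable'
    (f := fun F : Finset w => fun ω => ∑ i ∈ F, b.repr (f ω) i • b i)
    (Filter.atTop : Filter (Finset w)) (fun F => ?_) ?_
  · refine Finset.measurable_sum _ fun i _ => ?_
    have : (fun ω => b.repr (f ω) i • b i) = fun ω => (inner ℝ (f ω) (b i) : ℝ) • b i := by
      funext ω; rw [b.repr_apply_apply, real_inner_comm]
    rw [this]
    exact (h (b i)).smul_const _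
  · rw [tendsto_pi_nhds]
    exact fun ω => b.hasSum_repr (f ω)

end Aux

set_option maxHeartbeats 1000000 in
/-- Theorem 3.5(iv): if `μ` is a probability measure and every `L_ω` is an
isometry, then the integral resolvent mixture and comixture coincide:
`rmi(L_ω, A_ω) = rcm(L_ω, A_ω)`. -/
theorem stmt_6
    {Ω : Type*} [MeasurableSpace Ω] {μ : Measure Ω} [SigmaFinite μ] [μ.IsComplete]
    {X : Type*} [NormedAddCommGroup X] [InnerProductSpace ℝ X] [CompleteSpace X]
    [SecondCountableTopology X] [MeasurableSpace X] [BorelSpace X]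
    {H : Type*} [NormedAddCommGroup H] [InnerProductSpace ℝ H] [CompleteSpace H]
    [SecondCountableTopology H] [MeasurableSpace H] [BorelSpace H]
    -- the family of maximally monotone operators, with its resolvents `JA ω = J_{A_ω}`
    -- and the resolvents `JAinv ω = J_{A_ω⁻¹}` of the inverses
    (A : Ω → H → Set H) (JA JAinv : Ω → H → H)
    (hAmax : ∀ ω, IsMaxMonotone (A ω))
    (hJA : ∀ ω, IsResolventOf (A ω) (JA ω))
    (hJAinv : ∀ ω, IsResolventOf (graphInv (A ω)) (JAinv ω))
    (hJAmeas : ∀ x : Ω → H, Measurable x → Measurable fun ω => JA ω (x ω))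
    (hdom : ∃ x xs : Ω → H, Measurable x ∧ Measurable xs ∧
      (∫⁻ ω, (‖x ω‖₊ : ℝ≥0∞) ^ 2 ∂μ) < ⊤ ∧ (∫⁻ ω, (‖xs ω‖₊ : ℝ≥0∞) ^ 2 ∂μ) < ⊤ ∧
      ∀ᵐ ω ∂μ, xs ω ∈ A ω (x ω))
    -- the family of bounded linear operators
    (L : Ω → X →L[ℝ] H)
    (hLmeas : ∀ ξ : X, Measurable fun ω => L ω ξ)
    (hLint : Integrable (fun ω => ‖L ω‖ ^ 2) μ)
    (hL0 : 0 < ∫ ω, ‖L ω‖ ^ 2 ∂μ) (hL1 : (∫ ω, ‖L ω‖ ^ 2 ∂μ) ≤ 1)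
    [IsProbabilityMeasure μ]
    (hLiso : ∀ ω (ξ : X), ‖L ω ξ‖ = ‖ξ‖) :
    rmiOp (fun ξ : X => ∫ ω, (L ω).adjoint (JA ω (L ω ξ)) ∂μ)
      = graphInv (rmiOp fun ξ : X => ∫ ω, (L ω).adjoint (JAinv ω (L ω ξ)) ∂μ) := by
  classical
  obtain ⟨x, xs, hxm, hxsm, hx2, hxs2, hmem⟩ := hdom
  -- the inverse-resolvent identity `J_{A⁻¹} = Id - J_A`
  have hJid : ∀ ω y, JAinv ω y = y - JA ω y := by
    intro ω y
    have h1 : y - JA ω y ∈ A ω (JA ω y) := (hJA ω y (JA ω y)).mp rfl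
    refine (hJAinv ω y (y - JA ω y)).mpr ?_
    simpa [graphInv, sub_sub_cancel] using h1
  -- the resolvent is nonexpansive
  have hnonexp : ∀ ω (a c : H), ‖JA ω a - JA ω c‖ ≤ ‖a - c‖ := by
    intro ω a c
    set u := JA ω a with hu'
    set v := JA ω c with hv'
    have hu : a - u ∈ A ω u := (hJA ω a u).mp rfl
    have hv : c - v ∈ A ω v := (hJA ω c v).mp rfl
    have hmono : (0 : ℝ) ≤ inner ℝ (u - v) ((a - u) - (c - v)) := (hAmax ω).1 hu hv
    have hrw : ((a - u) - (c - v)) = (a - c) - (u - v) := by abel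
    rw [hrw, inner_sub_right, real_inner_self_eq_norm_sq] at hmono
    have hcs : (inner ℝ (u - v) (a - c) : ℝ) ≤ ‖u - v‖ * ‖a - c‖ := real_inner_le_norm _ _
    nlinarith [norm_nonneg (u - v), norm_nonneg (a - c)]
  -- a.e. fixed point fact
  have hfix : ∀ᵐ ω ∂μ, JA ω (x ω + xs ω) = x ω := by
    refine hmem.mono fun ω h => ?_
    exact (hJA ω (x ω + xs ω) (x ω)).mpr (by simpa [add_sub_cancel_left] using h)
  -- integrability of x and xs
  have hInt : ∀ (y : Ω → H), Measurable y → (∫⁻ ω, (‖y ω‖₊ : ℝ≥0∞) ^ 2 ∂μ) < ⊤ →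
      Integrable y μ := by
    intro y hym hy2
    refine ⟨hym.aestronglyMeasurable, ?_⟩
    simp only [HasFiniteIntegral]
    have hle : ∀ ω, (‖y ω‖₊ : ℝ≥0∞) ≤ 1 + (‖y ω‖₊ : ℝ≥0∞) ^ 2 := by
      intro ω
      rcases le_total ((‖y ω‖₊ : ℝ≥0∞)) 1 with h | h
      · exact h.trans le_self_add
      · calc (‖y ω‖₊ : ℝ≥0∞) = (‖y ω‖₊ : ℝ≥0∞) * 1 := (mul_one _).symm
          _ ≤ (‖y ω‖₊ : ℝ≥0∞) * (‖y ω‖₊ : ℝ≥0∞) := by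
              exact mul_le_mul_right h _
          _ = (‖y ω‖₊ : ℝ≥0∞) ^ 2 := (sq _).symm
          _ ≤ 1 + _ := le_add_self
    calc (∫⁻ ω, (‖y ω‖₊ : ℝ≥0∞) ∂μ) ≤ ∫⁻ ω, (1 + (‖y ω‖₊ : ℝ≥0∞) ^ 2) ∂μ :=
          lintegral_mono hle
      _ = μ Set.univ + ∫⁻ ω, (‖y ω‖₊ : ℝ≥0∞) ^ 2 ∂μ := by
          rw [lintegral_add_left measurable_const, lintegral_const, one_mul]
      _ < ⊤ := ENNReal.add_lt_top.mpr ⟨measure_lt_top μ _, hy2⟩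
  have hx1 : Integrable x μ := hInt x hxm hx2
  have hxs1 : Integrable xs μ := hInt xs hxsm hxs2
  -- operator norm bounds
  have hLnorm : ∀ ω, ‖L ω‖ ≤ 1 := fun ω =>
    (L ω).opNorm_le_bound zero_le_one (fun ξ => by rw [hLiso, one_mul])
  have hadj : ∀ ω (z : H), ‖(L ω).adjoint z‖ ≤ ‖z‖ := by
    intro ω z
    calc ‖(L ω).adjoint z‖ ≤ ‖(L ω).adjoint‖ * ‖z‖ := (L ω).adjoint.le_opNorm z
      _ ≤ 1 * ‖z‖ := by
          have hn : ‖(L ω).adjoint‖ = ‖L ω‖ :=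
            LinearIsometryEquiv.norm_map ContinuousLinearMap.adjoint (L ω)
          exact mul_le_mul_of_nonneg_right (hn.le.trans (hLnorm ω)) (norm_nonneg z)
      _ = ‖z‖ := one_mul _
  -- `L* L = Id`
  have hLL : ∀ ω (ξ : X), (L ω).adjoint (L ω ξ) = ξ := by
    intro ω ξ
    refine ext_inner_right ℝ fun η => ?_
    rw [ContinuousLinearMap.adjoint_inner_left]
    exact (LinearMap.norm_map_iff_inner_map_map (𝕜 := ℝ) (L ω)).mp (hLiso ω) ξ η
  -- measurability of the integrands
  have hgmeas : ∀ ξ' : X, Measurable fun ω => (L ω).adjoint (JA ω (L ω ξ')) := by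
    intro ξ'
    refine measurable_of_inner' fun η => ?_
    have : (fun ω => (inner ℝ ((L ω).adjoint (JA ω (L ω ξ'))) η : ℝ))
        = fun ω => (inner ℝ (JA ω (L ω ξ')) (L ω η) : ℝ) := by
      funext ω; rw [ContinuousLinearMap.adjoint_inner_left]
    rw [this]
    exact (hJAmeas _ (hLmeas ξ')).inner (hLmeas η)
  -- integrability of the integrands
  have hgint : ∀ ξ' : X, Integrable (fun ω => (L ω).adjoint (JA ω (L ω ξ'))) μ := by
    intro ξ'
    refine Integrable.mono' (g := fun ω => ‖ξ'‖ + ‖x ω‖ + (‖x ω‖ + ‖xs ω‖))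
      (((integrable_const _).add hx1.norm).add (hx1.norm.add hxs1.norm))
      (hgmeas ξ').aestronglyMeasurable ?_
    refine hfix.mono fun ω hω => ?_
    calc ‖(L ω).adjoint (JA ω (L ω ξ'))‖ ≤ ‖JA ω (L ω ξ')‖ := hadj ω _
      _ = ‖(JA ω (L ω ξ') - JA ω (x ω + xs ω)) + JA ω (x ω + xs ω)‖ := by
          congr 1; abel
      _ ≤ ‖JA ω (L ω ξ') - JA ω (x ω + xs ω)‖ + ‖JA ω (x ω + xs ω)‖ := norm_add_le _ _
      _ ≤ ‖L ω ξ' - (x ω + xs ω)‖ + ‖JA ω (x ω + xs ω)‖ :=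
          add_le_add_left (hnonexp ω _ _) _
      _ = ‖L ω ξ' - (x ω + xs ω)‖ + ‖x ω‖ := by rw [hω]
      _ ≤ (‖L ω ξ'‖ + ‖x ω + xs ω‖) + ‖x ω‖ := add_le_add_left (norm_sub_le _ _) _
      _ ≤ (‖ξ'‖ + (‖x ω‖ + ‖xs ω‖)) + ‖x ω‖ := by
          rw [hLiso]; exact add_le_add_left (add_le_add_right (norm_add_le _ _) _) _
      _ = ‖ξ'‖ + ‖x ω‖ + (‖x ω‖ + ‖xs ω‖) := by ring
  -- the comixture resolvent is `Id - R`
  have hR' : ∀ ξ' : X, (∫ ω, (L ω).adjoint (JAinv ω (L ω ξ')) ∂μ)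
      = ξ' - ∫ ω, (L ω).adjoint (JA ω (L ω ξ')) ∂μ := by
    intro ξ'
    have heq : (fun ω => (L ω).adjoint (JAinv ω (L ω ξ')))
        = fun ω => ξ' - (L ω).adjoint (JA ω (L ω ξ')) := by
      funext ω
      rw [hJid, map_sub, hLL]
    rw [heq, integral_sub (integrable_const ξ') (hgint ξ'), integral_const, probReal_univ,
      one_smul]
  -- conclusion
  funext ξ
  ext u
  simp only [rmiOp, graphInv, Set.mem_setOf_eq]
  rw [hR' (u + ξ), add_comm u ξ]
  constructor
  · intro h; rw [h]; abel
  · intro h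
    have h2 : ξ + u = u + ∫ ω, (L ω).adjoint (JA ω (L ω (ξ + u))) ∂μ :=
      sub_eq_iff_eq_add.mp h
    have h3 : (∫ ω, (L ω).adjoint (JA ω (L ω (ξ + u))) ∂μ) + u = ξ + u :=
      (h2.trans (add_comm _ _)).symm
    exact add_right_cancel h3
end

section
/- Under the stated hypotheses, with W = rmi(L_ω, A_ω)_{ω∈Ω} and C = rcm(L_ω, A_ω)_{ω∈Ω}, the index-1 Yosida approximations satisfy: W □ Id_X = Id_X − ∫_Ω (L_ω* ∘ (A_ω⁻¹ □ Id_H) ∘ L_ω) μ(dω) and C □ Id_X = ∫_Ω (L_ω* ∘ (A_ω □ Id_H) ∘ L_ω) μ(dω), where for a maximally monotone operator A the index-1 Yosida approximation is A □ Id = Id − J_A. Consequently, zer C = zer ∫_Ω (L_ω* ∘ (A_ω □ Id_H) ∘ L_ω) μ(dω). -/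
open MeasureTheory
open scoped ENNReal NNReal

/-- Theorem 3.5(vii)-(ix): with `W = rmi(L_ω, A_ω)` and
`C = rcm(L_ω, A_ω)` (whose resolvent is the map `Jc`), the index-1 Yosida approximations
satisfy `W □ Id = Id − ∫ L_ω* ∘ (A_ω⁻¹ □ Id) ∘ L_ω dμ` and
`C □ Id = ∫ L_ω* ∘ (A_ω □ Id) ∘ L_ω dμ`, where `A □ Id = Id − J_A`. Consequently
`zer C = zer ∫ L_ω* ∘ (A_ω □ Id) ∘ L_ω dμ`. -/
theorem stmt_7
    {Ω : Type*} [MeasurableSpace Ω] {μ : Measure Ω} [SigmaFinite μ] [μ.IsComplete]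
    {X : Type*} [NormedAddCommGroup X] [InnerProductSpace ℝ X] [CompleteSpace X]
    [SecondCountableTopology X] [MeasurableSpace X] [BorelSpace X]
    {H : Type*} [NormedAddCommGroup H] [InnerProductSpace ℝ H] [CompleteSpace H]
    [SecondCountableTopology H] [MeasurableSpace H] [BorelSpace H]
    -- the family of maximally monotone operators, with its resolvents `JA ω = J_{A_ω}`
    -- and the resolvents `JAinv ω = J_{A_ω⁻¹}` of the inverses
    (A : Ω → H → Set H) (JA JAinv : Ω → H → H)
    (hAmax : ∀ ω, IsMaxMonotone (A ω))
    (hJA : ∀ ω, IsResolventOf (A ω) (JA ω))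
    (hJAinv : ∀ ω, IsResolventOf (graphInv (A ω)) (JAinv ω))
    (hJAmeas : ∀ x : Ω → H, Measurable x → Measurable fun ω => JA ω (x ω))
    (hdom : ∃ x xs : Ω → H, Measurable x ∧ Measurable xs ∧
      (∫⁻ ω, (‖x ω‖₊ : ℝ≥0∞) ^ 2 ∂μ) < ⊤ ∧ (∫⁻ ω, (‖xs ω‖₊ : ℝ≥0∞) ^ 2 ∂μ) < ⊤ ∧
      ∀ᵐ ω ∂μ, xs ω ∈ A ω (x ω))
    -- the family of bounded linear operators
    (L : Ω → X →L[ℝ] H)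
    (hLmeas : ∀ ξ : X, Measurable fun ω => L ω ξ)
    (hLint : Integrable (fun ω => ‖L ω‖ ^ 2) μ)
    (hL0 : 0 < ∫ ω, ‖L ω‖ ^ 2 ∂μ) (hL1 : (∫ ω, ‖L ω‖ ^ 2 ∂μ) ≤ 1)
    (Jc : X → X)
    (hJc : IsResolventOf
      (graphInv (rmiOp fun ξ : X => ∫ ω, (L ω).adjoint (JAinv ω (L ω ξ)) ∂μ)) Jc) :
    (∀ ξ : X, ξ - (∫ ω, (L ω).adjoint (JA ω (L ω ξ)) ∂μ)
        = ξ - ∫ ω, (L ω).adjoint (L ω ξ - JAinv ω (L ω ξ)) ∂μ) ∧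
    (∀ ξ : X, ξ - Jc ξ = ∫ ω, (L ω).adjoint (L ω ξ - JA ω (L ω ξ)) ∂μ) ∧
    {ξ : X | (0 : X) ∈
        graphInv (rmiOp fun ζ : X => ∫ ω, (L ω).adjoint (JAinv ω (L ω ζ)) ∂μ) ξ}
      = {ξ : X | (∫ ω, (L ω).adjoint (L ω ξ - JA ω (L ω ξ)) ∂μ) = 0} := by
  -- Moreau decomposition: J_{A⁻¹} = Id − J_A
  have hkey : ∀ ω x, JAinv ω x = x - JA ω x := by
    intro ω x
    rw [hJAinv ω x (x - JA ω x)]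
    simp only [graphInv, Set.mem_setOf_eq, sub_sub_cancel]
    exact (hJA ω x (JA ω x)).mp rfl
  have hkey' : ∀ ω x, x - JAinv ω x = JA ω x := by
    intro ω x; rw [hkey]; abel
  set R : X → X := fun ξ : X => ∫ ω, (L ω).adjoint (JAinv ω (L ω ξ)) ∂μ with hR
  have hRJA : ∀ ξ, R ξ = ∫ ω, (L ω).adjoint (L ω ξ - JA ω (L ω ξ)) ∂μ := by
    intro ξ; simp only [hR, hkey]
  have hJcval : ∀ ξ, Jc ξ = ξ - R ξ := by
    intro ξ
    rw [hJc ξ (ξ - R ξ)]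
    simp only [graphInv, rmiOp, Set.mem_setOf_eq, sub_sub_cancel]
    congr 1
    abel
  refine ⟨?_, ?_, ?_⟩
  · intro ξ
    simp only [hkey']
  · intro ξ
    rw [hJcval, ← hRJA]
    abel
  · ext ξ
    simp only [graphInv, rmiOp, Set.mem_setOf_eq, zero_add, ← hR, hRJA]
end

section
/- Under the stated hypotheses, with W = rmi(L_ω, A_ω)_{ω∈Ω} and C = rcm(L_ω, A_ω)_{ω∈Ω}: the closure of dom W equals the closure of the set { ∫_Ω L_ω* x*(ω) μ(dω) : x* : Ω → H measurable with ∫_Ω ‖x*(ω)‖² μ(dω) < +∞ and x*(ω) ∈ dom A_ω for μ-a.e. ω }, and the closure of ran C equals the closure of the set { ∫_Ω L_ω* x*(ω) μ(dω) : x* : Ω → H measurable with ∫_Ω ‖x*(ω)‖² μ(dω) < +∞ and x*(ω) ∈ ran A_ω for μ-a.e. ω }. -/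
open MeasureTheory
open scoped ENNReal NNReal

open Filter Topology
set_option linter.unusedSectionVars false
set_option maxHeartbeats 1000000


section Pettis
variable {Ω : Type*} [MeasurableSpace Ω]
variable {X : Type*} [NormedAddCommGroup X] [InnerProductSpace ℝ X] [CompleteSpace X]
  [SecondCountableTopology X] [MeasurableSpace X] [BorelSpace X]

theorem measurable_of_inner_right {f : Ω → X}
    (h : ∀ c : X, Measurable fun ω => (inner ℝ (f ω) c : ℝ)) : Measurable f := by
  have : Nonempty X := ⟨0⟩
  set d : ℕ → X := TopologicalSpace.denseSeq X with hd
  set ι : X → ℕ → ℝ := fun y n => (inner ℝ y (d n) : ℝ) with hι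
  have hcont : Continuous ι := continuous_pi fun n => (continuous_id.inner continuous_const)
  have hinj : Function.Injective ι := by
    intro y y' hyy
    have hz : ∀ c : X, (inner ℝ (y - y') c : ℝ) = 0 := by
      intro c
      have hzero : ∀ n, (inner ℝ (y - y') (d n) : ℝ) = 0 := by
        intro n
        have := congrFun hyy n
        simp only [hι] at this
        simp [inner_sub_left, this]
      have hdense : DenseRange d := TopologicalSpace.denseRange_denseSeq X
      have hcont2 : Continuous fun c : X => (inner ℝ (y - y') c : ℝ) :=
        continuous_const.inner continuous_id
      have := Continuous.ext_on hdense hcont2 continuous_const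
        (by rintro c ⟨n, rfl⟩; exact hzero n)
      exact congrFun this c
    have := hz (y - y')
    rw [inner_self_eq_zero] at this
    exact sub_eq_zero.1 this
  have hemb : MeasurableEmbedding ι := hcont.measurableEmbedding hinj
  exact hemb.measurable_comp_iff.1 (measurable_pi_lambda _ fun n => h (d n))

end Pettis


section Firm
variable {E : Type*} [NormedAddCommGroup E] [InnerProductSpace ℝ E]

/-- firmly nonexpansive -/
def FirmNE (T : E → E) : Prop :=
  ∀ a b : E, ‖T a - T b‖ ^ 2 ≤ inner ℝ (T a - T b) (a - b)

theorem firmNE_of_resolvent {A : E → Set E} {J : E → E}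
    (hA : IsMonotoneOp A) (hJ : IsResolventOf A J) : FirmNE J := by
  intro a b
  have ha : a - J a ∈ A (J a) := (hJ a (J a)).1 rfl
  have hb : b - J b ∈ A (J b) := (hJ b (J b)).1 rfl
  have h := hA ha hb
  have hre : (a - J a) - (b - J b) = (a - b) - (J a - J b) := by abel
  rw [hre, inner_sub_right] at h
  have hs : (inner ℝ (J a - J b) (J a - J b) : ℝ) = ‖J a - J b‖ ^ 2 :=
    real_inner_self_eq_norm_sq _
  linarith

theorem FirmNE.norm_le {T : E → E} (hT : FirmNE T) (a b : E) :
    ‖T a - T b‖ ≤ ‖a - b‖ := by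
  have h := hT a b
  have h2 : (inner ℝ (T a - T b) (a - b) : ℝ) ≤ ‖T a - T b‖ * ‖a - b‖ :=
    real_inner_le_norm _ _
  nlinarith [norm_nonneg (T a - T b), norm_nonneg (a - b)]

theorem FirmNE.of_fixed {T S : E → E} (hT : FirmNE T) {t : ℝ} (ht : 1 ≤ t)
    (hS : ∀ x, S x = T (S x + t • (x - S x))) : FirmNE S := by
  intro x y
  have h := hT (S x + t • (x - S x)) (S y + t • (y - S y))
  rw [← hS x, ← hS y] at h
  have hre : (S x + t • (x - S x)) - (S y + t • (y - S y))
      = (1 - t) • (S x - S y) + t • (x - y) := by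
    simp only [smul_sub, sub_smul, one_smul]; abel
  rw [hre, inner_add_right, inner_smul_right, inner_smul_right,
    real_inner_self_eq_norm_sq] at h
  have ht0 : (0:ℝ) < t := by linarith
  nlinarith [h]

theorem FirmNE.fixed_unique {T : E → E} (hT : FirmNE T) {t : ℝ} (ht : 1 ≤ t) {z y₁ y₂ : E}
    (h1 : y₁ = T (y₁ + t • (z - y₁))) (h2 : y₂ = T (y₂ + t • (z - y₂))) : y₁ = y₂ := by
  have h := hT (y₁ + t • (z - y₁)) (y₂ + t • (z - y₂))
  rw [← h1, ← h2] at h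
  have hre : (y₁ + t • (z - y₁)) - (y₂ + t • (z - y₂)) = (1 - t) • (y₁ - y₂) := by
    simp only [smul_sub, sub_smul, one_smul]; abel
  rw [hre, inner_smul_right, real_inner_self_eq_norm_sq] at h
  have : ‖y₁ - y₂‖ ^ 2 ≤ 0 := by nlinarith [sq_nonneg ‖y₁ - y₂‖]
  have hn : ‖y₁ - y₂‖ = 0 := by nlinarith [norm_nonneg (y₁ - y₂), sq_nonneg ‖y₁ - y₂‖]
  exact sub_eq_zero.1 (norm_eq_zero.1 hn)

variable [CompleteSpace E]

/-- scaled resolvent: `rscale T n = J_{(3/4)^n W}` where `T = J_W`. -/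
noncomputable def rscale (T : E → E) : ℕ → E → E
  | 0 => T
  | n+1 => fun x =>
      haveI : Nonempty E := ⟨0⟩
      limUnder atTop fun k => (fun ζ => rscale T n ((4/3 : ℝ) • x - (1/3 : ℝ) • ζ))^[k] x

theorem rscale_contract {T : E → E} (hT : ∀ a b : E, ‖T a - T b‖ ≤ ‖a - b‖) (x : E) :
    ContractingWith (1/3 : ℝ≥0) (fun ζ => T ((4/3 : ℝ) • x - (1/3 : ℝ) • ζ)) := by
  constructor
  · rw [show (1/3 : ℝ≥0) = ⟨1/3, by norm_num⟩ by rfl]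
    exact (show (1/3 : ℝ≥0) < 1 by norm_num)
  · refine LipschitzWith.of_dist_le_mul fun a b => ?_
    simp only [dist_eq_norm]
    calc ‖T ((4/3 : ℝ) • x - (1/3 : ℝ) • a) - T ((4/3 : ℝ) • x - (1/3 : ℝ) • b)‖
        ≤ ‖((4/3 : ℝ) • x - (1/3 : ℝ) • a) - ((4/3 : ℝ) • x - (1/3 : ℝ) • b)‖ := hT _ _
      _ = (1/3 : ℝ) * ‖a - b‖ := by
          rw [show ((4/3 : ℝ) • x - (1/3 : ℝ) • a) - ((4/3 : ℝ) • x - (1/3 : ℝ) • b)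
              = (1/3 : ℝ) • (b - a) by simp only [smul_sub]; abel]
          rw [norm_smul]
          simp [norm_sub_rev a b]
      _ = (1/3 : ℝ≥0) * ‖a - b‖ := by norm_num

theorem rscale_fixed {T : E → E} (hT : FirmNE T) :
    ∀ (n : ℕ) (x : E), rscale T n x = T (rscale T n x + ((4/3 : ℝ) ^ n) • (x - rscale T n x)) := by
  intro n
  induction n with
  | zero =>
    intro x
    simp only [rscale, pow_zero, one_smul, add_sub_cancel]
  | succ n ih =>
    intro x
    haveI : Nonempty E := ⟨0⟩
    have hfirm : FirmNE (rscale T n) := hT.of_fixed (one_le_pow₀ (by norm_num)) ih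
    have hc := rscale_contract hfirm.norm_le x
    have hlim : rscale T (n+1) x = ContractingWith.fixedPoint _ hc :=
      (hc.tendsto_iterate_fixedPoint x).limUnder_eq
    set y := ContractingWith.fixedPoint _ hc with hy
    have hfix : rscale T n ((4/3 : ℝ) • x - (1/3 : ℝ) • y) = y := hc.fixedPoint_isFixedPt
    have key : y = T (y + ((4/3 : ℝ) ^ (n+1)) • (x - y)) := by
      have h1 : y = T (y + ((4/3 : ℝ) ^ n) • (((4/3 : ℝ) • x - (1/3 : ℝ) • y) - y)) := by
        conv_lhs => rw [← hfix]
        rw [ih ((4/3 : ℝ) • x - (1/3 : ℝ) • y), hfix]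
      have h2 : ((4/3 : ℝ) • x - (1/3 : ℝ) • y) - y = (4/3 : ℝ) • (x - y) := by
        rw [smul_sub]
        rw [show ((4/3 : ℝ) • x - (1/3 : ℝ) • y) - y = (4/3 : ℝ) • x - ((1/3 : ℝ) • y + y) by abel]
        congr 1
        rw [show (1/3 : ℝ) • y + y = (1/3 : ℝ) • y + (1 : ℝ) • y by rw [one_smul]]
        rw [← add_smul]; norm_num
      conv_lhs => rw [h1]
      rw [h2, smul_smul, ← pow_succ]
    rw [hlim]; exact key

theorem rscale_firmNE {T : E → E} (hT : FirmNE T) (n : ℕ) : FirmNE (rscale T n) :=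
  hT.of_fixed (one_le_pow₀ (by norm_num)) (rscale_fixed hT n)

theorem rscale_mem_range {T : E → E} (hT : FirmNE T) (n : ℕ) (x : E) :
    rscale T n x ∈ Set.range T :=
  ⟨_, (rscale_fixed hT n x).symm⟩

/-- characterization: any solution of the fixed point equation is `rscale T n z`. -/
theorem rscale_eq_of_fixed {T : E → E} (hT : FirmNE T) (n : ℕ) {z y : E}
    (h : y = T (y + ((4/3 : ℝ) ^ n) • (z - y))) : rscale T n z = y :=
  hT.fixed_unique (one_le_pow₀ (by norm_num)) (rscale_fixed hT n z) h

theorem rscale_succ_tendsto {T : E → E} (hT : FirmNE T) (n : ℕ) (x : E) :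
    Tendsto (fun k => (fun ζ => rscale T n ((4/3 : ℝ) • x - (1/3 : ℝ) • ζ))^[k] x) atTop
      (𝓝 (rscale T (n+1) x)) := by
  haveI : Nonempty E := ⟨0⟩
  have hfirm : FirmNE (rscale T n) := rscale_firmNE hT n
  have hc := rscale_contract hfirm.norm_le x
  have hlim : rscale T (n+1) x = ContractingWith.fixedPoint _ hc :=
    (hc.tendsto_iterate_fixedPoint x).limUnder_eq
  rw [hlim]
  exact hc.tendsto_iterate_fixedPoint x

end Firm

section RscaleMeas
variable {Ω : Type*} [MeasurableSpace Ω]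
variable {E : Type*} [NormedAddCommGroup E] [InnerProductSpace ℝ E] [CompleteSpace E]
  [SecondCountableTopology E] [MeasurableSpace E] [BorelSpace E]

theorem rscale_measurable {T : Ω → E → E} (hfirm : ∀ ω, FirmNE (T ω))
    (hT : ∀ v : Ω → E, Measurable v → Measurable fun ω => T ω (v ω)) :
    ∀ (n : ℕ) (v : Ω → E), Measurable v → Measurable fun ω => rscale (T ω) n (v ω) := by
  intro n
  induction n with
  | zero =>
    intro v hv
    exact hT v hv
  | succ n ih =>
    intro v hv
    have hiter : ∀ k : ℕ,
        Measurable fun ω =>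
          (fun ζ => rscale (T ω) n ((4/3 : ℝ) • v ω - (1/3 : ℝ) • ζ))^[k] (v ω) := by
      intro k
      induction k with
      | zero => simpa using hv
      | succ k ihk =>
        have heq : (fun ω =>
            (fun ζ => rscale (T ω) n ((4/3 : ℝ) • v ω - (1/3 : ℝ) • ζ))^[k+1] (v ω))
            = fun ω => rscale (T ω) n ((4/3 : ℝ) • v ω - (1/3 : ℝ) •
                ((fun ζ => rscale (T ω) n ((4/3 : ℝ) • v ω - (1/3 : ℝ) • ζ))^[k] (v ω))) := by
          funext ω
          rw [Function.iterate_succ_apply']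
        rw [heq]
        exact ih _ ((hv.const_smul _).sub (ihk.const_smul _))
    refine measurable_of_tendsto_metrizable' atTop hiter ?_
    rw [tendsto_pi_nhds]
    intro ω
    exact rscale_succ_tendsto (hfirm ω) n (v ω)

end RscaleMeas

section L2
variable {Ω : Type*} [MeasurableSpace Ω] {μ : Measure Ω}
variable {X : Type*} [NormedAddCommGroup X] [InnerProductSpace ℝ X] [CompleteSpace X]
  [SecondCountableTopology X] [MeasurableSpace X] [BorelSpace X]
variable {H : Type*} [NormedAddCommGroup H] [InnerProductSpace ℝ H] [CompleteSpace H]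
  [SecondCountableTopology H] [MeasurableSpace H] [BorelSpace H]

theorem lint_sq_iff_integrable_sq {f : Ω → H} (hf : Measurable f) :
    (∫⁻ ω, (‖f ω‖₊ : ℝ≥0∞) ^ 2 ∂μ) < ⊤ ↔ Integrable (fun ω => ‖f ω‖ ^ 2) μ := by
  have key : ∀ ω, ‖(‖f ω‖ ^ 2)‖ₑ = (‖f ω‖₊ : ℝ≥0∞) ^ 2 := by
    intro ω
    show (‖(‖f ω‖ ^ 2)‖₊ : ℝ≥0∞) = _
    rw [nnnorm_pow, nnnorm_norm, ENNReal.coe_pow]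
  constructor
  · intro h
    refine ⟨((hf.norm).pow_const 2).aestronglyMeasurable, ?_⟩
    rw [hasFiniteIntegral_def]
    simpa only [key] using h
  · intro h
    have := h.hasFiniteIntegral
    rw [hasFiniteIntegral_def] at this
    simpa only [key] using this

/-- square-integrability bundle -/
def L2fun (μ : Measure Ω) (f : Ω → H) : Prop :=
  Measurable f ∧ Integrable (fun ω => ‖f ω‖ ^ 2) μ

theorem L2fun.of_le {f : Ω → H} {b : Ω → ℝ} (hf : Measurable f)
    (hb : Integrable (fun ω => b ω ^ 2) μ) (h : ∀ᵐ ω ∂μ, ‖f ω‖ ≤ b ω) : L2fun μ f := by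
  refine ⟨hf, Integrable.mono' hb ((hf.norm.pow_const 2).aestronglyMeasurable) ?_⟩
  filter_upwards [h] with ω hω
  have h0 : (0:ℝ) ≤ ‖f ω‖ := norm_nonneg _
  rw [Real.norm_eq_abs, abs_of_nonneg (by positivity)]
  nlinarith

theorem integrable_sq_add {b c : Ω → ℝ} (hb : AEMeasurable b μ) (hc : AEMeasurable c μ)
    (hb2 : Integrable (fun ω => b ω ^ 2) μ) (hc2 : Integrable (fun ω => c ω ^ 2) μ) :
    Integrable (fun ω => (b ω + c ω) ^ 2) μ := by
  refine Integrable.mono' (((hb2.const_mul 2)).add ((hc2.const_mul 2)))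
    (((hb.add hc).pow_const 2).aestronglyMeasurable) ?_
  filter_upwards with ω
  simp only [Pi.add_apply]
  rw [Real.norm_eq_abs, abs_of_nonneg (sq_nonneg _)]
  nlinarith [sq_nonneg (b ω - c ω)]

theorem L2fun.sub {f g : Ω → H} (hf : L2fun μ f) (hg : L2fun μ g) : L2fun μ (f - g) := by
  refine L2fun.of_le (hf.1.sub hg.1) (b := fun ω => ‖f ω‖ + ‖g ω‖)
    (integrable_sq_add hf.1.norm.aemeasurable hg.1.norm.aemeasurable hf.2 hg.2) ?_
  filter_upwards with ω
  exact norm_sub_le _ _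

theorem L2fun.smul (c : ℝ) {f : Ω → H} (hf : L2fun μ f) : L2fun μ (fun ω => c • f ω) := by
  refine ⟨hf.1.const_smul c, ?_⟩
  have : (fun ω => ‖c • f ω‖ ^ 2) = fun ω => c ^ 2 * ‖f ω‖ ^ 2 := by
    funext ω; rw [norm_smul]; simp [mul_pow]
  rw [this]
  exact hf.2.const_mul _

theorem L2fun.integrable_inner {f g : Ω → H} (hf : L2fun μ f) (hg : L2fun μ g) :
    Integrable (fun ω => (inner ℝ (f ω) (g ω) : ℝ)) μ := by
  refine Integrable.mono' (((hf.2.const_mul (1/2))).add ((hg.2.const_mul (1/2))))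
    ((hf.1.inner hg.1).aestronglyMeasurable) ?_
  filter_upwards with ω
  simp only [Pi.add_apply]
  have h1 : |(inner ℝ (f ω) (g ω) : ℝ)| ≤ ‖f ω‖ * ‖g ω‖ := abs_real_inner_le_norm _ _
  rw [Real.norm_eq_abs]
  nlinarith [sq_nonneg (‖f ω‖ - ‖g ω‖), norm_nonneg (f ω), norm_nonneg (g ω)]

theorem L2fun.inner_le {f g : Ω → H} (hf : L2fun μ f) (hg : L2fun μ g) :
    ∫ ω, (inner ℝ (f ω) (g ω) : ℝ) ∂μ
      ≤ ((∫ ω, ‖f ω‖ ^ 2 ∂μ) + ∫ ω, ‖g ω‖ ^ 2 ∂μ) / 2 := by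
  have h1 : ∫ ω, (inner ℝ (f ω) (g ω) : ℝ) ∂μ
      ≤ ∫ ω, (‖f ω‖ ^ 2 + ‖g ω‖ ^ 2) / 2 ∂μ := by
    refine integral_mono (hf.integrable_inner hg) ((hf.2.add hg.2).div_const 2) fun ω => ?_
    have h1 : (inner ℝ (f ω) (g ω) : ℝ) ≤ ‖f ω‖ * ‖g ω‖ := real_inner_le_norm _ _
    nlinarith [sq_nonneg (‖f ω‖ - ‖g ω‖)]
  calc ∫ ω, (inner ℝ (f ω) (g ω) : ℝ) ∂μ ≤ _ := h1
    _ = ((∫ ω, ‖f ω‖ ^ 2 ∂μ) + ∫ ω, ‖g ω‖ ^ 2 ∂μ) / 2 := by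
        rw [integral_div, integral_add hf.2 hg.2]

end L2

section L2b
variable {Ω : Type*} [MeasurableSpace Ω] {μ : Measure Ω}
variable {H : Type*} [NormedAddCommGroup H] [InnerProductSpace ℝ H] [CompleteSpace H]
  [SecondCountableTopology H] [MeasurableSpace H] [BorelSpace H]

theorem L2fun.sub' {f g : Ω → H} (hf : L2fun μ f) (hg : L2fun μ g) :
    L2fun μ (fun ω => f ω - g ω) := hf.sub hg

theorem L2fun.add' {f g : Ω → H} (hf : L2fun μ f) (hg : L2fun μ g) :
    L2fun μ (fun ω => f ω + g ω) := by
  refine L2fun.of_le (hf.1.add hg.1) (b := fun ω => ‖f ω‖ + ‖g ω‖)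
    (integrable_sq_add hf.1.norm.aemeasurable hg.1.norm.aemeasurable hf.2 hg.2) ?_
  filter_upwards with ω
  exact norm_add_le _ _

end L2b

section Adj
variable {Ω : Type*} [MeasurableSpace Ω] {μ : Measure Ω}
variable {X : Type*} [NormedAddCommGroup X] [InnerProductSpace ℝ X] [CompleteSpace X]
  [SecondCountableTopology X] [MeasurableSpace X] [BorelSpace X]
variable {H : Type*} [NormedAddCommGroup H] [InnerProductSpace ℝ H] [CompleteSpace H]
  [SecondCountableTopology H] [MeasurableSpace H] [BorelSpace H]
variable {L : Ω → X →L[ℝ] H}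


theorem measurable_adjoint_apply (hLmeas : ∀ ξ : X, Measurable fun ω => L ω ξ)
    {v : Ω → H} (hv : Measurable v) :
    Measurable fun ω => (L ω).adjoint (v ω) := by
  refine measurable_of_inner_right fun c => ?_
  have : (fun ω => (inner ℝ ((L ω).adjoint (v ω)) c : ℝ)) = fun ω => (inner ℝ (v ω) (L ω c) : ℝ) := by
    funext ω
    exact ContinuousLinearMap.adjoint_inner_left (L ω) c (v ω)
  rw [this]
  exact hv.inner (hLmeas c)

theorem norm_adjoint_apply_le (ω : Ω) (v : H) : ‖(L ω).adjoint v‖ ≤ ‖L ω‖ * ‖v‖ := by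
  calc ‖(L ω).adjoint v‖ ≤ ‖(L ω).adjoint‖ * ‖v‖ := ContinuousLinearMap.le_opNorm _ _
    _ = ‖L ω‖ * ‖v‖ := by rw [LinearIsometryEquiv.norm_map]

theorem aemeasurable_normL (hLint : Integrable (fun ω => ‖L ω‖ ^ 2) μ) :
    AEMeasurable (fun ω => ‖L ω‖) μ := by
  have h2 : AEMeasurable (fun ω => ‖L ω‖ ^ 2) μ := hLint.aemeasurable
  have he : (fun ω => ‖L ω‖) = fun ω => Real.sqrt (‖L ω‖ ^ 2) := by
    funext ω; rw [Real.sqrt_sq (norm_nonneg _)]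
  rw [he]
  exact (Real.continuous_sqrt.measurable).comp_aemeasurable h2

theorem integrable_normL_mul (hLint : Integrable (fun ω => ‖L ω‖ ^ 2) μ)
    {b : Ω → ℝ} (hb : AEMeasurable b μ) (hb2 : Integrable (fun ω => b ω ^ 2) μ) :
    Integrable (fun ω => ‖L ω‖ * b ω) μ := by
  refine Integrable.mono' ((hLint.const_mul (1/2)).add (hb2.const_mul (1/2)))
    ((aemeasurable_normL hLint).mul hb).aestronglyMeasurable ?_
  filter_upwards with ω
  simp only [Pi.add_apply]
  rw [Real.norm_eq_abs, abs_mul, abs_of_nonneg (norm_nonneg _)]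
  nlinarith [sq_nonneg (‖L ω‖ - |b ω|), sq_abs (b ω), abs_nonneg (b ω), norm_nonneg (L ω)]

theorem integrable_adjoint_apply (hLmeas : ∀ ξ : X, Measurable fun ω => L ω ξ)
    (hLint : Integrable (fun ω => ‖L ω‖ ^ 2) μ) {v : Ω → H} (hv : L2fun μ v) :
    Integrable (fun ω => (L ω).adjoint (v ω)) μ := by
  refine Integrable.mono' (integrable_normL_mul hLint hv.1.norm.aemeasurable hv.2)
    (measurable_adjoint_apply hLmeas hv.1).aestronglyMeasurable ?_
  filter_upwards with ω
  exact norm_adjoint_apply_le ω (v ω)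

theorem adjoint_integral_inner (hLmeas : ∀ ξ : X, Measurable fun ω => L ω ξ)
    (hLint : Integrable (fun ω => ‖L ω‖ ^ 2) μ) {v : Ω → H} (hv : L2fun μ v) (c : X) :
    (inner ℝ (∫ ω, (L ω).adjoint (v ω) ∂μ) c : ℝ) = ∫ ω, (inner ℝ (v ω) (L ω c) : ℝ) ∂μ := by
  rw [real_inner_comm, ← integral_inner (integrable_adjoint_apply hLmeas hLint hv) c]
  congr 1
  funext ω
  rw [real_inner_comm]
  exact ContinuousLinearMap.adjoint_inner_left (L ω) c (v ω)

theorem L2fun_L_apply (hLmeas : ∀ ξ : X, Measurable fun ω => L ω ξ)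
    (hLint : Integrable (fun ω => ‖L ω‖ ^ 2) μ) (c : X) :
    L2fun μ (fun ω => L ω c) := by
  refine ⟨hLmeas c, ?_⟩
  refine Integrable.mono' (hLint.mul_const (‖c‖ ^ 2))
    (((hLmeas c).norm.pow_const 2).aestronglyMeasurable) ?_
  filter_upwards with ω
  rw [Real.norm_eq_abs, abs_of_nonneg (sq_nonneg _)]
  calc ‖L ω c‖ ^ 2 ≤ (‖L ω‖ * ‖c‖) ^ 2 := by
        have := (L ω).le_opNorm c
        nlinarith [norm_nonneg (L ω c)]
    _ = ‖L ω‖ ^ 2 * ‖c‖ ^ 2 := by ring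

end Adj

section Master
variable {Ω : Type*} [MeasurableSpace Ω] {μ : Measure Ω}
variable {X : Type*} [NormedAddCommGroup X] [InnerProductSpace ℝ X] [CompleteSpace X]
  [SecondCountableTopology X] [MeasurableSpace X] [BorelSpace X]
variable {H : Type*} [NormedAddCommGroup H] [InnerProductSpace ℝ H] [CompleteSpace H]
  [SecondCountableTopology H] [MeasurableSpace H] [BorelSpace H]

theorem master_closure_eq
    (A : Ω → H → Set H) (JA : Ω → H → H)
    (hmono : ∀ ω, IsMonotoneOp (A ω))
    (hJA : ∀ ω, IsResolventOf (A ω) (JA ω))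
    (hJAmeas : ∀ x : Ω → H, Measurable x → Measurable fun ω => JA ω (x ω))
    (x₀ xs₀ : Ω → H) (hx₀ : L2fun μ x₀) (hxs₀ : L2fun μ xs₀)
    (hA₀ : ∀ᵐ ω ∂μ, xs₀ ω ∈ A ω (x₀ ω))
    (L : Ω → X →L[ℝ] H)
    (hLmeas : ∀ ξ : X, Measurable fun ω => L ω ξ)
    (hLint : Integrable (fun ω => ‖L ω‖ ^ 2) μ)
    (hL1 : (∫ ω, ‖L ω‖ ^ 2 ∂μ) ≤ 1) :
    closure (Set.range fun ζ : X => ∫ ω, (L ω).adjoint (JA ω (L ω ζ)) ∂μ)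
      = closure {ξ : X | ∃ xs : Ω → H, Measurable xs ∧
          (∫⁻ ω, (‖xs ω‖₊ : ℝ≥0∞) ^ 2 ∂μ) < ⊤ ∧
          (∀ᵐ ω ∂μ, (A ω (xs ω)).Nonempty) ∧ ξ = ∫ ω, (L ω).adjoint (xs ω) ∂μ} := by
  have hfirmJ : ∀ ω, FirmNE (JA ω) := fun ω => firmNE_of_resolvent (hmono ω) (hJA ω)
  set T : X → X := fun ζ => ∫ ω, (L ω).adjoint (JA ω (L ω ζ)) ∂μ with hTdef
  -- the big "G" bound function
  set G : Ω → ℝ := fun ω => ‖x₀ ω‖ + (‖x₀ ω‖ + ‖xs₀ ω‖) with hGdef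
  have hGmeas : AEMeasurable G μ :=
    (hx₀.1.norm.aemeasurable.add (hx₀.1.norm.aemeasurable.add hxs₀.1.norm.aemeasurable))
  have hG2 : Integrable (fun ω => G ω ^ 2) μ :=
    integrable_sq_add hx₀.1.norm.aemeasurable
      (hx₀.1.norm.aemeasurable.add hxs₀.1.norm.aemeasurable) hx₀.2
      (integrable_sq_add hx₀.1.norm.aemeasurable hxs₀.1.norm.aemeasurable hx₀.2 hxs₀.2)
  -- uniform bound on all scaled resolvents
  have hRbound : ∀ᵐ ω ∂μ, ∀ (n : ℕ) (z : H), ‖rscale (JA ω) n z‖ ≤ ‖z‖ + G ω := by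
    filter_upwards [hA₀] with ω h₀ n z
    have hfixn : rscale (JA ω) n (x₀ ω + ((3/4 : ℝ) ^ n) • xs₀ ω) = x₀ ω := by
      refine rscale_eq_of_fixed (hfirmJ ω) n ?_
      have h1 : ((4/3 : ℝ) ^ n) • ((x₀ ω + ((3/4 : ℝ) ^ n) • xs₀ ω) - x₀ ω) = xs₀ ω := by
        rw [add_sub_cancel_left, smul_smul, ← mul_pow]
        norm_num
      rw [h1]
      exact ((hJA ω (x₀ ω + xs₀ ω) (x₀ ω)).2 (by simpa [add_sub_cancel_left] using h₀)).symm
    have h2 : ‖rscale (JA ω) n z - x₀ ω‖ ≤ ‖z - (x₀ ω + ((3/4 : ℝ) ^ n) • xs₀ ω)‖ := by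
      conv_lhs => rw [← hfixn]
      exact (rscale_firmNE (hfirmJ ω) n).norm_le _ _
    have h3 : ‖z - (x₀ ω + ((3/4 : ℝ) ^ n) • xs₀ ω)‖ ≤ ‖z‖ + (‖x₀ ω‖ + ‖xs₀ ω‖) := by
      have h4 : ‖((3/4 : ℝ) ^ n) • xs₀ ω‖ ≤ ‖xs₀ ω‖ := by
        rw [norm_smul, Real.norm_eq_abs, abs_of_nonneg (by positivity)]
        have : (3/4 : ℝ) ^ n ≤ 1 := pow_le_one₀ (by norm_num) (by norm_num)
        nlinarith [norm_nonneg (xs₀ ω)]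
      calc ‖z - (x₀ ω + ((3/4 : ℝ) ^ n) • xs₀ ω)‖
          ≤ ‖z‖ + ‖x₀ ω + ((3/4 : ℝ) ^ n) • xs₀ ω‖ := norm_sub_le _ _
        _ ≤ ‖z‖ + (‖x₀ ω‖ + ‖((3/4 : ℝ) ^ n) • xs₀ ω‖) := by
            have := norm_add_le (x₀ ω) (((3/4 : ℝ) ^ n) • xs₀ ω); linarith
        _ ≤ ‖z‖ + (‖x₀ ω‖ + ‖xs₀ ω‖) := by linarith
    have h5 : ‖rscale (JA ω) n z‖ ≤ ‖rscale (JA ω) n z - x₀ ω‖ + ‖x₀ ω‖ := by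
      have := norm_add_le (rscale (JA ω) n z - x₀ ω) (x₀ ω)
      simpa using this
    simp only [hGdef]
    linarith
  -- J(Lζ) is L²
  have hJL2 : ∀ ζ : X, L2fun μ (fun ω => JA ω (L ω ζ)) := by
    intro ζ
    refine L2fun.of_le (hJAmeas _ (hLmeas ζ)) (b := fun ω => ‖L ω‖ * ‖ζ‖ + G ω) ?_ ?_
    · exact integrable_sq_add ((aemeasurable_normL hLint).mul_const _) hGmeas
        (by simpa [mul_pow] using hLint.mul_const (‖ζ‖ ^ 2)) hG2
    · filter_upwards [hRbound] with ω hb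
      have := hb 0 (L ω ζ)
      simp only [rscale] at this
      calc ‖JA ω (L ω ζ)‖ ≤ ‖L ω ζ‖ + G ω := this
        _ ≤ ‖L ω‖ * ‖ζ‖ + G ω := by
            have := (L ω).le_opNorm ζ; linarith
  -- T is firmly nonexpansive
  have hTfirm : FirmNE T := by
    intro ζ ζ'
    set D : Ω → H := fun ω => JA ω (L ω ζ) - JA ω (L ω ζ') with hDdef
    have hDL2 : L2fun μ D := (hJL2 ζ).sub' (hJL2 ζ')
    have hTsub : T ζ - T ζ' = ∫ ω, (L ω).adjoint (D ω) ∂μ := by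
      rw [show (fun ω => (L ω).adjoint (D ω))
          = fun ω => (L ω).adjoint (JA ω (L ω ζ)) - (L ω).adjoint (JA ω (L ω ζ')) from
        funext fun ω => map_sub _ _ _]
      rw [integral_sub (integrable_adjoint_apply hLmeas hLint (hJL2 ζ))
        (integrable_adjoint_apply hLmeas hLint (hJL2 ζ'))]
    have key1 : ∀ c : X, (inner ℝ (T ζ - T ζ') c : ℝ) = ∫ ω, (inner ℝ (D ω) (L ω c) : ℝ) ∂μ := by
      intro c
      rw [hTsub]
      exact adjoint_integral_inner hLmeas hLint hDL2 c
    set N2 := ∫ ω, ‖D ω‖ ^ 2 ∂μ with hN2def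
    have hge : N2 ≤ (inner ℝ (T ζ - T ζ') (ζ - ζ') : ℝ) := by
      rw [key1 (ζ - ζ')]
      refine integral_mono hDL2.2
        (hDL2.integrable_inner (L2fun_L_apply hLmeas hLint (ζ - ζ'))) fun ω => ?_
      have h := hfirmJ ω (L ω ζ) (L ω ζ')
      rw [show L ω ζ - L ω ζ' = L ω (ζ - ζ') from (map_sub _ _ _).symm] at h
      exact h
    have hub : ‖T ζ - T ζ'‖ ^ 2 ≤ N2 := by
      have h1 : (inner ℝ (T ζ - T ζ') (T ζ - T ζ') : ℝ)
          = ∫ ω, (inner ℝ (D ω) (L ω (T ζ - T ζ')) : ℝ) ∂μ := key1 _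
      set wv := T ζ - T ζ' with hwv
      have h2 : ∫ ω, (inner ℝ (D ω) (L ω wv) : ℝ) ∂μ
          ≤ ∫ ω, (‖D ω‖ ^ 2 + ‖L ω‖ ^ 2 * ‖wv‖ ^ 2) / 2 ∂μ := by
        refine integral_mono (hDL2.integrable_inner (L2fun_L_apply hLmeas hLint wv))
          (((hDL2.2.add (hLint.mul_const _))).div_const 2) fun ω => ?_
        have ha : (inner ℝ (D ω) (L ω wv) : ℝ) ≤ ‖D ω‖ * ‖L ω wv‖ := real_inner_le_norm _ _
        have hb : ‖L ω wv‖ ≤ ‖L ω‖ * ‖wv‖ := (L ω).le_opNorm wv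
        simp only [Pi.add_apply]
        nlinarith [norm_nonneg (D ω), norm_nonneg (L ω wv), norm_nonneg (L ω),
          norm_nonneg wv, sq_nonneg (‖D ω‖ - ‖L ω‖ * ‖wv‖)]
      have h3 : ∫ ω, (‖D ω‖ ^ 2 + ‖L ω‖ ^ 2 * ‖wv‖ ^ 2) / 2 ∂μ
          = (N2 + (∫ ω, ‖L ω‖ ^ 2 ∂μ) * ‖wv‖ ^ 2) / 2 := by
        rw [integral_div, integral_add hDL2.2 (hLint.mul_const _), integral_mul_const]
      have h4 : (∫ ω, ‖L ω‖ ^ 2 ∂μ) * ‖wv‖ ^ 2 ≤ ‖wv‖ ^ 2 :=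
        mul_le_of_le_one_left (sq_nonneg _) hL1
      have h5 : (inner ℝ wv wv : ℝ) = ‖wv‖ ^ 2 := real_inner_self_eq_norm_sq _
      rw [h5] at h1
      rw [h1]
      linarith [h2, h3.le, h3.ge]
    calc ‖T ζ - T ζ'‖ ^ 2 ≤ N2 := hub
      _ ≤ _ := hge
  -- easy inclusion
  have hsub1 : Set.range T ⊆ {ξ : X | ∃ xs : Ω → H, Measurable xs ∧
      (∫⁻ ω, (‖xs ω‖₊ : ℝ≥0∞) ^ 2 ∂μ) < ⊤ ∧
      (∀ᵐ ω ∂μ, (A ω (xs ω)).Nonempty) ∧ ξ = ∫ ω, (L ω).adjoint (xs ω) ∂μ} := by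
    rintro ξ ⟨ζ, rfl⟩
    exact ⟨fun ω => JA ω (L ω ζ), (hJL2 ζ).1,
      (lint_sq_iff_integrable_sq (hJL2 ζ).1).2 (hJL2 ζ).2,
      Eventually.of_forall fun ω => ⟨L ω ζ - JA ω (L ω ζ), (hJA ω _ _).1 rfl⟩, rfl⟩
  -- key step: for L² q with an L² selection, ∫ L† q ∈ closure (range T)
  have hkey : ∀ qq uu : Ω → H, L2fun μ qq → L2fun μ uu →
      (∀ᵐ ω ∂μ, uu ω ∈ A ω (qq ω)) →
      (∫ ω, (L ω).adjoint (qq ω) ∂μ) ∈ closure (Set.range T) := by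
    intro qq uu hqq huu hmem
    set xb : X := ∫ ω, (L ω).adjoint (qq ω) ∂μ with hxbdef
    set ζ : ℕ → X := fun m => rscale T m xb with hζdef
    have hζmem : ∀ m, ζ m ∈ Set.range T := fun m => rscale_mem_range hTfirm m xb
    set w : Ω → H := fun ω => L ω xb - (qq ω + uu ω) with hwdef
    have hwL2 : L2fun μ w := (L2fun_L_apply hLmeas hLint xb).sub' (hqq.add' huu)
    set C2 := ∫ ω, ‖w ω‖ ^ 2 ∂μ with hC2def
    have hC2 : 0 ≤ C2 := integral_nonneg fun ω => sq_nonneg _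
    have hest : ∀ m : ℕ, 1 ≤ m → ‖ζ m - xb‖ ^ 2 ≤ C2 / (2 * ((4/3 : ℝ) ^ m - 1)) := by
      intro m hm
      set t := (4/3 : ℝ) ^ m with htdef
      have ht : 1 < t := one_lt_pow₀ (by norm_num) (by omega)
      set z := ζ m + t • (xb - ζ m) with hzdef
      have hζT : ζ m = T z := rscale_fixed hTfirm m xb
      set pm : Ω → H := fun ω => JA ω (L ω z) with hpmdef
      have hpmL2 : L2fun μ pm := hJL2 z
      have hpmem : ∀ ω, L ω z - pm ω ∈ A ω (pm ω) := fun ω => (hJA ω _ _).1 rfl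
      have hd : L2fun μ (fun ω => pm ω - qq ω) := hpmL2.sub' hqq
      set S1 := ∫ ω, ‖pm ω - qq ω‖ ^ 2 ∂μ with hS1def
      have hS1 : 0 ≤ S1 := integral_nonneg fun ω => sq_nonneg _
      -- ∫ L†(pm - qq) = ζ m - xb
      have hdiffint : ∫ ω, (L ω).adjoint (pm ω - qq ω) ∂μ = ζ m - xb := by
        rw [show (fun ω => (L ω).adjoint (pm ω - qq ω))
            = fun ω => (L ω).adjoint (pm ω) - (L ω).adjoint (qq ω) from
          funext fun ω => map_sub _ _ _]
        rw [integral_sub (integrable_adjoint_apply hLmeas hLint hpmL2)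
          (integrable_adjoint_apply hLmeas hLint hqq)]
        rw [hζT, hxbdef]
      have hswapd : ∀ c : X,
          ∫ ω, (inner ℝ (pm ω - qq ω) (L ω c) : ℝ) ∂μ = (inner ℝ (ζ m - xb) c : ℝ) := by
        intro c
        rw [← adjoint_integral_inner hLmeas hLint hd c, hdiffint]
      -- base inequality from monotonicity
      have h0 : 0 ≤ ∫ ω, (inner ℝ (pm ω - qq ω) ((L ω z - pm ω) - uu ω) : ℝ) ∂μ := by
        refine integral_nonneg_of_ae ?_
        filter_upwards [hmem] with ω hω
        exact hmono ω (hpmem ω) hω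
      -- expand the integrand
      have hLz : L2fun μ (fun ω => L ω z) := L2fun_L_apply hLmeas hLint z
      have i1 : Integrable (fun ω => (inner ℝ (pm ω - qq ω) (L ω z) : ℝ)) μ :=
        hd.integrable_inner hLz
      have i2 : Integrable (fun ω => ‖pm ω - qq ω‖ ^ 2) μ := hd.2
      have i3 : Integrable (fun ω => (inner ℝ (pm ω - qq ω) (qq ω) : ℝ)) μ :=
        hd.integrable_inner hqq
      have i4 : Integrable (fun ω => (inner ℝ (pm ω - qq ω) (uu ω) : ℝ)) μ :=
        hd.integrable_inner huu
      have i23 : Integrable (fun ω => ‖pm ω - qq ω‖ ^ 2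
          + (inner ℝ (pm ω - qq ω) (qq ω) : ℝ)) μ := i2.add i3
      have i123 : Integrable (fun ω => (inner ℝ (pm ω - qq ω) (L ω z) : ℝ)
          - (‖pm ω - qq ω‖ ^ 2 + (inner ℝ (pm ω - qq ω) (qq ω) : ℝ))) μ := i1.sub i23
      have hsplit : ∫ ω, (inner ℝ (pm ω - qq ω) ((L ω z - pm ω) - uu ω) : ℝ) ∂μ
          = (∫ ω, (inner ℝ (pm ω - qq ω) (L ω z) : ℝ) ∂μ)
            - (S1 + ∫ ω, (inner ℝ (pm ω - qq ω) (qq ω) : ℝ) ∂μ)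
            - ∫ ω, (inner ℝ (pm ω - qq ω) (uu ω) : ℝ) ∂μ := by
        have hpoint : ∀ ω, (inner ℝ (pm ω - qq ω) ((L ω z - pm ω) - uu ω) : ℝ)
            = (inner ℝ (pm ω - qq ω) (L ω z) : ℝ)
              - (‖pm ω - qq ω‖ ^ 2 + (inner ℝ (pm ω - qq ω) (qq ω) : ℝ))
              - (inner ℝ (pm ω - qq ω) (uu ω) : ℝ) := by
          intro ω
          have e1 : (inner ℝ (pm ω - qq ω) ((L ω z - pm ω) - uu ω) : ℝ)
              = inner ℝ (pm ω - qq ω) (L ω z) - inner ℝ (pm ω - qq ω) (pm ω)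
                - inner ℝ (pm ω - qq ω) (uu ω) := by
            rw [inner_sub_right, inner_sub_right]
          have e2 : (inner ℝ (pm ω - qq ω) (pm ω) : ℝ)
              = ‖pm ω - qq ω‖ ^ 2 + inner ℝ (pm ω - qq ω) (qq ω) := by
            have e3 : (inner ℝ (pm ω - qq ω) (pm ω - qq ω) : ℝ)
                = inner ℝ (pm ω - qq ω) (pm ω) - inner ℝ (pm ω - qq ω) (qq ω) :=
              inner_sub_right _ _ _
            rw [real_inner_self_eq_norm_sq] at e3
            linarith
          rw [e1, e2]
        calc ∫ ω, (inner ℝ (pm ω - qq ω) ((L ω z - pm ω) - uu ω) : ℝ) ∂μ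
            = ∫ ω, ((inner ℝ (pm ω - qq ω) (L ω z) : ℝ)
              - (‖pm ω - qq ω‖ ^ 2 + (inner ℝ (pm ω - qq ω) (qq ω) : ℝ))
              - (inner ℝ (pm ω - qq ω) (uu ω) : ℝ)) ∂μ := by
              exact integral_congr_ae (Eventually.of_forall hpoint)
          _ = (∫ ω, ((inner ℝ (pm ω - qq ω) (L ω z) : ℝ)
              - (‖pm ω - qq ω‖ ^ 2 + (inner ℝ (pm ω - qq ω) (qq ω) : ℝ))) ∂μ)
              - ∫ ω, (inner ℝ (pm ω - qq ω) (uu ω) : ℝ) ∂μ := integral_sub i123 i4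
          _ = (∫ ω, (inner ℝ (pm ω - qq ω) (L ω z) : ℝ) ∂μ)
              - (∫ ω, (‖pm ω - qq ω‖ ^ 2
                + (inner ℝ (pm ω - qq ω) (qq ω) : ℝ)) ∂μ)
              - ∫ ω, (inner ℝ (pm ω - qq ω) (uu ω) : ℝ) ∂μ := by
              rw [integral_sub i1 i23]
          _ = _ := by rw [integral_add i2 i3]
      -- E := ∫ ⟪pm-qq, w⟫
      have iLxb : Integrable (fun ω => (inner ℝ (pm ω - qq ω) (L ω xb) : ℝ)) μ :=
        hd.integrable_inner (L2fun_L_apply hLmeas hLint xb)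
      have i34 : Integrable (fun ω => (inner ℝ (pm ω - qq ω) (L ω xb) : ℝ)
          - (inner ℝ (pm ω - qq ω) (qq ω) : ℝ)) μ := iLxb.sub i3
      have hE : ∫ ω, (inner ℝ (pm ω - qq ω) (w ω) : ℝ) ∂μ
          = (inner ℝ (ζ m - xb) xb : ℝ)
            - (∫ ω, (inner ℝ (pm ω - qq ω) (qq ω) : ℝ) ∂μ)
            - ∫ ω, (inner ℝ (pm ω - qq ω) (uu ω) : ℝ) ∂μ := by
        have hpoint : ∀ ω, (inner ℝ (pm ω - qq ω) (w ω) : ℝ)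
            = (inner ℝ (pm ω - qq ω) (L ω xb) : ℝ) - (inner ℝ (pm ω - qq ω) (qq ω) : ℝ)
              - (inner ℝ (pm ω - qq ω) (uu ω) : ℝ) := by
          intro ω
          simp only [hwdef]
          rw [inner_sub_right, inner_add_right]
          ring
        calc ∫ ω, (inner ℝ (pm ω - qq ω) (w ω) : ℝ) ∂μ
            = ∫ ω, ((inner ℝ (pm ω - qq ω) (L ω xb) : ℝ)
              - (inner ℝ (pm ω - qq ω) (qq ω) : ℝ)
              - (inner ℝ (pm ω - qq ω) (uu ω) : ℝ)) ∂μ :=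
              integral_congr_ae (Eventually.of_forall hpoint)
          _ = (∫ ω, ((inner ℝ (pm ω - qq ω) (L ω xb) : ℝ)
              - (inner ℝ (pm ω - qq ω) (qq ω) : ℝ)) ∂μ)
              - ∫ ω, (inner ℝ (pm ω - qq ω) (uu ω) : ℝ) ∂μ := integral_sub i34 i4
          _ = (∫ ω, (inner ℝ (pm ω - qq ω) (L ω xb) : ℝ) ∂μ)
              - (∫ ω, (inner ℝ (pm ω - qq ω) (qq ω) : ℝ) ∂μ)
              - ∫ ω, (inner ℝ (pm ω - qq ω) (uu ω) : ℝ) ∂μ := by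
              rw [integral_sub iLxb i3]
          _ = _ := by rw [hswapd xb]
      have hEle : ∫ ω, (inner ℝ (pm ω - qq ω) (w ω) : ℝ) ∂μ ≤ (S1 + C2) / 2 :=
        hd.inner_le hwL2
      -- combine
      have hzx : (inner ℝ (ζ m - xb) z : ℝ) - (inner ℝ (ζ m - xb) xb : ℝ)
          = (1 - t) * ‖ζ m - xb‖ ^ 2 := by
        rw [← inner_sub_right]
        have : z - xb = (1 - t) • (ζ m - xb) := by
          simp only [hzdef, smul_sub, sub_smul, one_smul]; abel
        rw [this, inner_smul_right, real_inner_self_eq_norm_sq]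
      have hfinal : (t - 1) * ‖ζ m - xb‖ ^ 2 + S1
          ≤ ∫ ω, (inner ℝ (pm ω - qq ω) (w ω) : ℝ) ∂μ := by
        have h1 := hswapd z
        rw [hsplit, h1] at h0
        rw [hE]
        nlinarith [h0, hzx]
      have h9 : (t - 1) * ‖ζ m - xb‖ ^ 2 ≤ C2 / 2 := by linarith
      rw [le_div_iff₀ (by nlinarith : (0:ℝ) < 2 * ((4/3 : ℝ) ^ m - 1))]
      calc ‖ζ m - xb‖ ^ 2 * (2 * ((4/3 : ℝ) ^ m - 1)) = 2 * ((t - 1) * ‖ζ m - xb‖ ^ 2) := by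
            rw [htdef]; ring
        _ ≤ C2 := by linarith
    -- limit
    have hdiv : Tendsto (fun m : ℕ => C2 / (2 * ((4/3 : ℝ) ^ m - 1))) atTop (𝓝 0) := by
      refine Tendsto.div_atTop tendsto_const_nhds ?_
      have h1 : Tendsto (fun m : ℕ => (4/3 : ℝ) ^ m) atTop atTop :=
        tendsto_pow_atTop_atTop_of_one_lt (by norm_num)
      have h2 : Tendsto (fun m : ℕ => (4/3 : ℝ) ^ m - 1) atTop atTop :=
        tendsto_atTop_add_const_right atTop (-1) h1
      exact h2.const_mul_atTop (by norm_num)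
    have hζtend : Tendsto ζ atTop (𝓝 xb) := by
      have hsq : Tendsto (fun m => ‖ζ m - xb‖ ^ 2) atTop (𝓝 0) := by
        refine squeeze_zero' (Eventually.of_forall fun m => sq_nonneg _) ?_ hdiv
        filter_upwards [eventually_ge_atTop 1] with m hm
        exact hest m hm
      have hno : Tendsto (fun m => ‖ζ m - xb‖) atTop (𝓝 0) := by
        have heq : (fun m => ‖ζ m - xb‖) = fun m => Real.sqrt (‖ζ m - xb‖ ^ 2) :=
          funext fun m => (Real.sqrt_sq (norm_nonneg _)).symm
        rw [heq]
        have h2 := (Real.continuous_sqrt.tendsto 0).comp hsq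
        simpa [Real.sqrt_zero, Function.comp_def] using h2
      rw [tendsto_iff_norm_sub_tendsto_zero]
      exact hno
    exact mem_closure_of_tendsto hζtend (Eventually.of_forall hζmem)
  -- hard inclusion
  have hsub2 : {ξ : X | ∃ xs : Ω → H, Measurable xs ∧
      (∫⁻ ω, (‖xs ω‖₊ : ℝ≥0∞) ^ 2 ∂μ) < ⊤ ∧
      (∀ᵐ ω ∂μ, (A ω (xs ω)).Nonempty) ∧ ξ = ∫ ω, (L ω).adjoint (xs ω) ∂μ}
      ⊆ closure (Set.range T) := by
    rintro ξ ⟨p, hpm, hpl, hpdom, rfl⟩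
    have hp : L2fun μ p := ⟨hpm, (lint_sq_iff_integrable_sq hpm).1 hpl⟩
    set q : ℕ → Ω → H := fun n ω => rscale (JA ω) n (p ω) with hqdef
    have hqmeas : ∀ n, Measurable (q n) := fun n =>
      rscale_measurable hfirmJ hJAmeas n p hpm
    have hqbd : ∀ᵐ ω ∂μ, ∀ n, ‖q n ω‖ ≤ ‖p ω‖ + G ω := by
      filter_upwards [hRbound] with ω hb n
      exact hb n (p ω)
    have hpG2 : Integrable (fun ω => (‖p ω‖ + G ω) ^ 2) μ :=
      integrable_sq_add hpm.norm.aemeasurable hGmeas hp.2 hG2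
    have hqL2 : ∀ n, L2fun μ (q n) := fun n =>
      L2fun.of_le (hqmeas n) hpG2 (by filter_upwards [hqbd] with ω hb; exact hb n)
    have huA : ∀ (n : ℕ) (ω : Ω), ((4/3 : ℝ) ^ n) • (p ω - q n ω) ∈ A ω (q n ω) := by
      intro n ω
      have h := rscale_fixed (hfirmJ ω) n (p ω)
      have h2 := (hJA ω _ _).1 h.symm
      simpa [add_sub_cancel_left] using h2
    have huL2 : ∀ n, L2fun μ (fun ω => ((4/3 : ℝ) ^ n) • (p ω - q n ω)) := fun n =>
      (hp.sub' (hqL2 n)).smul _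
    have hmem : ∀ n, (∫ ω, (L ω).adjoint (q n ω) ∂μ) ∈ closure (Set.range T) := fun n =>
      hkey (q n) _ (hqL2 n) (huL2 n) (Eventually.of_forall (huA n))
    have htend : Tendsto (fun n => ∫ ω, (L ω).adjoint (q n ω) ∂μ) atTop
        (𝓝 (∫ ω, (L ω).adjoint (p ω) ∂μ)) := by
      refine tendsto_integral_of_dominated_convergence
        (fun ω => ‖L ω‖ * (‖p ω‖ + G ω))
        (fun n => (measurable_adjoint_apply hLmeas (hqmeas n)).aestronglyMeasurable)
        (integrable_normL_mul hLint (hpm.norm.aemeasurable.add hGmeas) hpG2) ?_ ?_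
      · intro n
        filter_upwards [hqbd] with ω hb
        calc ‖(L ω).adjoint (q n ω)‖ ≤ ‖L ω‖ * ‖q n ω‖ := norm_adjoint_apply_le ω _
          _ ≤ ‖L ω‖ * (‖p ω‖ + G ω) :=
            mul_le_mul_of_nonneg_left (hb n) (norm_nonneg _)
      · filter_upwards [hpdom] with ω hω
        obtain ⟨u, hu⟩ := hω
        have hb : ∀ n, ‖p ω - q n ω‖ ≤ (3/4 : ℝ) ^ n * ‖u‖ := by
          intro n
          have h1 := hmono ω hu (huA n ω)
          rw [inner_sub_right, inner_smul_right, real_inner_self_eq_norm_sq] at h1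
          have h2 : (inner ℝ (p ω - q n ω) u : ℝ) ≤ ‖p ω - q n ω‖ * ‖u‖ :=
            real_inner_le_norm _ _
          rcases eq_or_lt_of_le (norm_nonneg (p ω - q n ω)) with h3 | h3
          · rw [← h3]; positivity
          · have h4 : (4/3 : ℝ) ^ n * ‖p ω - q n ω‖ ≤ ‖u‖ := by
              have h5 : (0:ℝ) < (4/3 : ℝ) ^ n := by positivity
              nlinarith
            have h6 : (3/4 : ℝ) ^ n * ((4/3 : ℝ) ^ n * ‖p ω - q n ω‖)
                ≤ (3/4 : ℝ) ^ n * ‖u‖ :=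
              mul_le_mul_of_nonneg_left h4 (by positivity)
            calc ‖p ω - q n ω‖
                = (3/4 : ℝ) ^ n * ((4/3 : ℝ) ^ n * ‖p ω - q n ω‖) := by
                  rw [← mul_assoc, ← mul_pow]; norm_num
              _ ≤ (3/4 : ℝ) ^ n * ‖u‖ := h6
        have hq_tend : Tendsto (fun n => q n ω) atTop (𝓝 (p ω)) := by
          have hz : Tendsto (fun n : ℕ => (3/4 : ℝ) ^ n * ‖u‖) atTop (𝓝 0) := by
            have := tendsto_pow_atTop_nhds_zero_of_lt_one
              (by norm_num : (0:ℝ) ≤ 3/4) (by norm_num : (3/4:ℝ) < 1)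
            simpa using this.mul_const ‖u‖
          have hsq : Tendsto (fun n => ‖q n ω - p ω‖) atTop (𝓝 0) := by
            refine squeeze_zero (fun n => norm_nonneg _) (fun n => ?_) hz
            rw [norm_sub_rev]
            exact hb n
          rw [tendsto_iff_norm_sub_tendsto_zero]
          exact hsq
        exact ((L ω).adjoint.continuous.tendsto (p ω)).comp hq_tend
    exact isClosed_closure.mem_of_tendsto htend (Eventually.of_forall hmem)
  exact Set.Subset.antisymm (closure_mono hsub1) (closure_minimal hsub2 isClosed_closure)

end Master

/-- Theorem 3.5(ix)-(x): with `W = rmi(L_ω, A_ω)` and `C = rcm(L_ω, A_ω)`,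
the closure of `dom W` equals the closure of
`{∫ L_ω* x*(ω) dμ : x*` measurable, `∫‖x*‖² dμ < ∞`, `x*(ω) ∈ dom A_ω` μ-a.e.`}`, and the
closure of `ran C` equals the closure of the same set with `ran A_ω` in place of `dom A_ω`. -/
theorem stmt_8
    {Ω : Type*} [MeasurableSpace Ω] {μ : Measure Ω} [SigmaFinite μ] [μ.IsComplete]
    {X : Type*} [NormedAddCommGroup X] [InnerProductSpace ℝ X] [CompleteSpace X]
    [SecondCountableTopology X] [MeasurableSpace X] [BorelSpace X]
    {H : Type*} [NormedAddCommGroup H] [InnerProductSpace ℝ H] [CompleteSpace H]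
    [SecondCountableTopology H] [MeasurableSpace H] [BorelSpace H]
    -- the family of maximally monotone operators, with its resolvents `JA ω = J_{A_ω}`
    -- and the resolvents `JAinv ω = J_{A_ω⁻¹}` of the inverses
    (A : Ω → H → Set H) (JA JAinv : Ω → H → H)
    (hAmax : ∀ ω, IsMaxMonotone (A ω))
    (hJA : ∀ ω, IsResolventOf (A ω) (JA ω))
    (hJAinv : ∀ ω, IsResolventOf (graphInv (A ω)) (JAinv ω))
    (hJAmeas : ∀ x : Ω → H, Measurable x → Measurable fun ω => JA ω (x ω))
    (hdom : ∃ x xs : Ω → H, Measurable x ∧ Measurable xs ∧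
      (∫⁻ ω, (‖x ω‖₊ : ℝ≥0∞) ^ 2 ∂μ) < ⊤ ∧ (∫⁻ ω, (‖xs ω‖₊ : ℝ≥0∞) ^ 2 ∂μ) < ⊤ ∧
      ∀ᵐ ω ∂μ, xs ω ∈ A ω (x ω))
    -- the family of bounded linear operators
    (L : Ω → X →L[ℝ] H)
    (hLmeas : ∀ ξ : X, Measurable fun ω => L ω ξ)
    (hLint : Integrable (fun ω => ‖L ω‖ ^ 2) μ)
    (hL0 : 0 < ∫ ω, ‖L ω‖ ^ 2 ∂μ) (hL1 : (∫ ω, ‖L ω‖ ^ 2 ∂μ) ≤ 1)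
    :
    closure {ξ : X |
        ((rmiOp fun ζ : X => ∫ ω, (L ω).adjoint (JA ω (L ω ζ)) ∂μ) ξ).Nonempty}
      = closure {ξ : X | ∃ xs : Ω → H, Measurable xs ∧
          (∫⁻ ω, (‖xs ω‖₊ : ℝ≥0∞) ^ 2 ∂μ) < ⊤ ∧
          (∀ᵐ ω ∂μ, (A ω (xs ω)).Nonempty) ∧ ξ = ∫ ω, (L ω).adjoint (xs ω) ∂μ} ∧
    closure {η : X | ∃ ξ : X,
        η ∈ graphInv (rmiOp fun ζ : X => ∫ ω, (L ω).adjoint (JAinv ω (L ω ζ)) ∂μ) ξ}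
      = closure {ξ : X | ∃ xs : Ω → H, Measurable xs ∧
          (∫⁻ ω, (‖xs ω‖₊ : ℝ≥0∞) ^ 2 ∂μ) < ⊤ ∧
          (∀ᵐ ω ∂μ, ∃ y : H, xs ω ∈ A ω y) ∧ ξ = ∫ ω, (L ω).adjoint (xs ω) ∂μ} := by
  obtain ⟨x₀, xs₀, hx₀m, hxs₀m, hx₀2, hxs₀2, hA₀⟩ := hdom
  have hx₀ : L2fun μ x₀ := ⟨hx₀m, (lint_sq_iff_integrable_sq hx₀m).1 hx₀2⟩
  have hxs₀ : L2fun μ xs₀ := ⟨hxs₀m, (lint_sq_iff_integrable_sq hxs₀m).1 hxs₀2⟩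
  have hmono : ∀ ω, IsMonotoneOp (A ω) := fun ω => (hAmax ω).1
  constructor
  · -- first statement
    have hset1 : {ξ : X |
        ((rmiOp fun ζ : X => ∫ ω, (L ω).adjoint (JA ω (L ω ζ)) ∂μ) ξ).Nonempty}
        = Set.range fun ζ : X => ∫ ω, (L ω).adjoint (JA ω (L ω ζ)) ∂μ := by
      ext ξ
      constructor
      · rintro ⟨u, hu⟩
        exact ⟨ξ + u, hu⟩
      · rintro ⟨ζ, hζ⟩
        refine ⟨ζ - ξ, ?_⟩
        show (∫ ω, (L ω).adjoint (JA ω (L ω (ξ + (ζ - ξ)))) ∂μ) = ξ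
        rw [show ξ + (ζ - ξ) = ζ from by abel]
        exact hζ
    rw [hset1]
    exact master_closure_eq A JA hmono hJA hJAmeas x₀ xs₀ hx₀ hxs₀ hA₀ L hLmeas hLint hL1
  · -- second statement
    have hmono' : ∀ ω, IsMonotoneOp (graphInv (A ω)) := by
      intro ω x u y v hu hv
      have h := hmono ω hu hv
      rw [real_inner_comm]
      exact h
    have hJinv_eq : ∀ ω z, JAinv ω z = z - JA ω z := by
      intro ω z
      have h1 : JAinv ω z ∈ A ω (z - JAinv ω z) := (hJAinv ω z (JAinv ω z)).1 rfl
      have h2 : JA ω z = z - JAinv ω z := by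
        refine (hJA ω z (z - JAinv ω z)).2 ?_
        rw [sub_sub_cancel]
        exact h1
      rw [h2, sub_sub_cancel]
    have hJAinvmeas : ∀ v : Ω → H, Measurable v → Measurable fun ω => JAinv ω (v ω) := by
      intro v hv
      have : (fun ω => JAinv ω (v ω)) = fun ω => v ω - JA ω (v ω) := by
        funext ω; rw [hJinv_eq]
      rw [this]
      exact hv.sub (hJAmeas v hv)
    have hA₀' : ∀ᵐ ω ∂μ, x₀ ω ∈ graphInv (A ω) (xs₀ ω) := by
      filter_upwards [hA₀] with ω h
      exact h
    have hset2 : {η : X | ∃ ξ : X,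
        η ∈ graphInv (rmiOp fun ζ : X => ∫ ω, (L ω).adjoint (JAinv ω (L ω ζ)) ∂μ) ξ}
        = Set.range fun ζ : X => ∫ ω, (L ω).adjoint (JAinv ω (L ω ζ)) ∂μ := by
      ext η
      constructor
      · rintro ⟨ξ, hξ⟩
        exact ⟨η + ξ, hξ⟩
      · rintro ⟨ζ, hζ⟩
        refine ⟨ζ - η, ?_⟩
        show (∫ ω, (L ω).adjoint (JAinv ω (L ω (η + (ζ - η)))) ∂μ) = η
        rw [show η + (ζ - η) = ζ from by abel]
        exact hζ
    rw [hset2]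
    exact master_closure_eq (fun ω => graphInv (A ω)) JAinv hmono' hJAinv hJAinvmeas
      xs₀ x₀ hxs₀ hx₀ hA₀' L hLmeas hLint hL1
end
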